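/- arXiv:2206.14019 — 2 statements merged into one kernel-verified Lean document; each statement's English description precedes it below -/
import Mathlib

section
/- Let 𝓘 be a maximal ideal independent family of infinite subsets of ℕ with |𝓘| < 2^ℵ₀. Then the set of those A ∈ 𝓘 for which the complemented filter 𝓕(𝓘, A) is not an ultrafilter is finite. -/
open Cardinal Set Filter

/-- A family of subsets of ℕ is ideal independent if for every `A` in the family and
every finite subfamily `F` not containing `A`, the set `A \ ⋃ F` is infinite. -/
def IdealIndependent (I : Set (Set ℕ)) : Prop :=
  ∀ A ∈ I, ∀ F : Finset (Set ℕ), ↑F ⊆ I \ {A} → (A \ ⋃₀ ↑F).Infinite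

/-- A maximal ideal independent family. -/
def MaxIdealIndependent (I : Set (Set ℕ)) : Prop :=
  IdealIndependent I ∧ ∀ J : Set (Set ℕ), IdealIndependent J → I ⊆ J → J = I

/-- The complemented filter 𝓕(𝓘, A) of an ideal independent family `I` corresponding
to `A ∈ I`: the filter generated by the sets `A \ ⋃ F` for finite `F ⊆ I \ {A}`. -/
def complFilter (I : Set (Set ℕ)) (A : Set ℕ) : Filter ℕ :=
  Filter.generate { S | ∃ F : Finset (Set ℕ), ↑F ⊆ I \ {A} ∧ S = A \ ⋃₀ ↑F }

/-- A proper filter on ℕ which decides every subset of ℕ, i.e. an ultrafilter. -/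
def IsUltraOn (F : Filter ℕ) : Prop :=
  F ≠ ⊥ ∧ ∀ D : Set ℕ, D ∈ F ∨ Dᶜ ∈ F

noncomputable local instance : DecidableEq (Set ℕ) := Classical.decEq _

section AuxIdeal

variable (I : Set (Set ℕ))

/-- A member `A` of `I` is pointed if some point belongs to every base set of the
complemented filter. -/
def PointedIn (A : Set ℕ) : Prop := ∃ e, e ∈ A ∧ ∀ C ∈ I, C ≠ A → e ∉ C

lemma sUnion_coe_union (F G : Finset (Set ℕ)) :
    ⋃₀ (↑(F ∪ G) : Set (Set ℕ)) = ⋃₀ (↑F : Set (Set ℕ)) ∪ ⋃₀ (↑G : Set (Set ℕ)) := by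
  rw [Finset.coe_union, Set.sUnion_union]

lemma mem_complFilter_iff {A T : Set ℕ} :
    T ∈ complFilter I A ↔ ∃ F : Finset (Set ℕ), ↑F ⊆ I \ {A} ∧ A \ ⋃₀ ↑F ⊆ T := by
  constructor
  · intro hT
    rw [complFilter, Filter.mem_generate_iff] at hT
    obtain ⟨s, hsub, hfin, hinter⟩ := hT
    have key : ∀ s : Set (Set ℕ), s.Finite →
        s ⊆ { S | ∃ F : Finset (Set ℕ), ↑F ⊆ I \ {A} ∧ S = A \ ⋃₀ ↑F } →
        ∃ F : Finset (Set ℕ), ↑F ⊆ I \ {A} ∧ A \ ⋃₀ ↑F ⊆ ⋂₀ s := by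
      intro s hfin
      refine Set.Finite.induction_on (motive := fun s _ => s ⊆ _ →
        ∃ F : Finset (Set ℕ), ↑F ⊆ I \ {A} ∧ A \ ⋃₀ ↑F ⊆ ⋂₀ s) s hfin
        (fun _ => ⟨∅, by simp, by simp⟩) ?_
      intro T₀ s' hni hfin ih hsub
      obtain ⟨F₁, hF₁, hF₁'⟩ := ih (fun u hu => hsub (Set.mem_insert_of_mem _ hu))
      obtain ⟨F₀, hF₀, hT₀⟩ := hsub (Set.mem_insert _ _)
      refine ⟨F₀ ∪ F₁, ?_, ?_⟩
      · rw [Finset.coe_union]; exact Set.union_subset hF₀ hF₁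
      · rw [sUnion_coe_union, Set.sInter_insert]
        intro p hp
        refine ⟨?_, hF₁' ⟨hp.1, fun h => hp.2 (Set.mem_union_right _ h)⟩⟩
        rw [hT₀]
        exact ⟨hp.1, fun h => hp.2 (Set.mem_union_left _ h)⟩
    obtain ⟨F, h1, h2⟩ := key s hfin hsub
    exact ⟨F, h1, h2.trans hinter⟩
  · rintro ⟨F, hF, hsub⟩
    exact Filter.mem_of_superset (Filter.mem_generate_of_mem ⟨F, hF, rfl⟩) hsub

lemma pos_part {A : Set ℕ} {W : Set ℕ}
    (hW : Wᶜ ∉ complFilter I A) {F : Finset (Set ℕ)} (hF : ↑F ⊆ I \ {A}) :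
    ((A \ ⋃₀ ↑F) ∩ W).Nonempty := by
  by_contra h
  have he : (A \ ⋃₀ ↑F) ∩ W = ∅ := Set.not_nonempty_iff_eq_empty.1 h
  apply hW
  rw [mem_complFilter_iff]
  refine ⟨F, hF, fun p hp => ?_⟩
  intro hpW
  have : p ∈ (A \ ⋃₀ ↑F) ∩ W := ⟨hp, hpW⟩
  rw [he] at this
  exact this

lemma pos_infinite {A : Set ℕ} (hnp : ¬ PointedIn I A) {W : Set ℕ}
    (hpos : ∀ F : Finset (Set ℕ), ↑F ⊆ I \ {A} → ((A \ ⋃₀ ↑F) ∩ W).Nonempty)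
    {F : Finset (Set ℕ)} (hF : ↑F ⊆ I \ {A}) : ((A \ ⋃₀ ↑F) ∩ W).Infinite := by
  classical
  by_contra h
  rw [Set.not_infinite] at h
  have hCe : ∀ e ∈ (A \ ⋃₀ ↑F) ∩ W, ∃ C, C ∈ I ∧ C ≠ A ∧ e ∈ C := by
    intro e he
    by_contra hc; push_neg at hc
    exact hnp ⟨e, he.1.1, fun C hC hne heC => (hc C hC hne) heC⟩
  choose! g hg1 hg2 hg3 using hCe
  set F' : Finset (Set ℕ) := F ∪ h.toFinset.image g with hF'def
  have hF' : ↑F' ⊆ I \ {A} := by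
    rw [hF'def, Finset.coe_union]
    rintro c (hc | hc)
    · exact hF hc
    · rw [Finset.coe_image] at hc
      obtain ⟨e, he, rfl⟩ := hc
      rw [Finset.mem_coe, Set.Finite.mem_toFinset] at he
      exact ⟨hg1 e he, fun hh => (hg2 e he) hh⟩
  obtain ⟨p, hp⟩ := hpos F' hF'
  have hpE : p ∈ (A \ ⋃₀ ↑F) ∩ W := by
    refine ⟨⟨hp.1.1, fun hx => hp.1.2 ?_⟩, hp.2⟩
    rw [hF'def, sUnion_coe_union]
    exact Set.mem_union_left _ hx
  apply hp.1.2
  rw [hF'def, sUnion_coe_union]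
  refine Set.mem_union_right _ ⟨g p, ?_, hg3 p hpE⟩
  exact Finset.mem_coe.2 (Finset.mem_image_of_mem g (h.mem_toFinset.2 hpE))

end AuxIdeal

section Pointed

variable {I : Set (Set ℕ)}

lemma pointed_not_infinite (hI : MaxIdealIndependent I) :
    ¬ {A ∈ I | PointedIn I A}.Infinite := by
  classical
  obtain ⟨hIind, hImax⟩ := hI
  intro hinf
  set P := {A ∈ I | PointedIn I A} with hP
  let emb := hinf.natEmbedding
  set A : ℕ → Set ℕ := fun n => (emb n : Set ℕ) with hA
  have hAI : ∀ n, A n ∈ I := fun n => (emb n).2.1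
  have hAP : ∀ n, PointedIn I (A n) := fun n => (emb n).2.2
  have hAinj : Function.Injective A := fun m n h =>
    emb.injective (Subtype.coe_injective h)
  choose e he using hAP
  have he1 : ∀ n, e n ∈ A n := fun n => (he n).1
  have he2 : ∀ n, ∀ C ∈ I, C ≠ A n → e n ∉ C := fun n => (he n).2
  have heinj : Function.Injective e := by
    intro m n hmn
    by_contra hne
    have hAmn : A n ≠ A m := fun h => hne (hAinj h).symm
    exact he2 m (A n) (hAI n) hAmn (hmn ▸ he1 n)
  set B : Set ℕ := Set.range e with hB
  have hBI : B ∉ I := by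
    intro hBmem
    by_cases hB0 : B = A 0
    · have h01 : A 0 ≠ A 1 := fun h => Nat.zero_ne_one (hAinj h)
      exact he2 1 (A 0) (hAI 0) h01 (hB0 ▸ ⟨1, rfl⟩)
    · exact he2 0 B hBmem hB0 ⟨0, rfl⟩
  have hJind : IdealIndependent (insert B I) := by
    intro A' hA' F hF
    rcases Set.mem_insert_iff.1 hA' with rfl | hA'I
    · -- A' is B
      have hFI : ↑F ⊆ I := by
        intro c hc
        obtain ⟨hcJ, hcne⟩ := hF hc
        have hcB : c ≠ B := by simpa using hcne
        exact (Set.mem_insert_iff.1 hcJ).resolve_left hcB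
      have hfinpre : {n | A n ∈ (↑F : Set (Set ℕ))}.Finite :=
        Set.Finite.preimage hAinj.injOn F.finite_toSet
      have hsub : e '' {n | A n ∉ (↑F : Set (Set ℕ))} ⊆ B \ ⋃₀ ↑F := by
        rintro _ ⟨n, hn, rfl⟩
        refine ⟨⟨n, rfl⟩, ?_⟩
        rintro ⟨c, hcF, hec⟩
        by_cases hc : c = A n
        · exact hn (hc ▸ hcF)
        · exact he2 n c (hFI hcF) hc hec
      refine Set.Infinite.mono hsub ?_
      exact Set.Infinite.image (heinj.injOn)
        ((Set.infinite_univ.diff hfinpre).mono (by intro n hn; exact hn.2))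
    · have hA'B : A' ≠ B := fun h => hBI (h ▸ hA'I)
      set F' := F.erase B with hF'd
      have hF' : ↑F' ⊆ I \ {A'} := by
        intro c hc
        rw [Finset.mem_coe, hF'd, Finset.mem_erase] at hc
        obtain ⟨hcB, hcF⟩ := hc
        obtain ⟨hcJ, hcne⟩ := hF (Finset.mem_coe.2 hcF)
        exact ⟨(Set.mem_insert_iff.1 hcJ).resolve_left hcB, hcne⟩
      have hbig : (A' \ ⋃₀ ↑F').Infinite := hIind A' hA'I F' hF'
      have hfinAB : (A' ∩ B).Finite := by
        have hsub2 : A' ∩ B ⊆ e '' {n | A n = A'} := by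
          rintro p ⟨hpA, n, rfl⟩
          by_cases h : A n = A'
          · exact ⟨n, h, rfl⟩
          · exact absurd hpA (he2 n A' hA'I (fun hh => h hh.symm))
        refine Set.Finite.subset (Set.Finite.image e ?_) hsub2
        exact Set.Subsingleton.finite (fun m hm n hn => hAinj (hm.trans hn.symm))
      refine Set.Infinite.mono ?_ ((hbig.diff hfinAB))
      intro p hp
      refine ⟨hp.1.1, ?_⟩
      rintro ⟨c, hcF, hpc⟩
      by_cases hc : c = B
      · exact hp.2 ⟨hp.1.1, hc ▸ hpc⟩
      · exact hp.1.2 ⟨c, Finset.mem_coe.2 (Finset.mem_erase.2 ⟨hc, Finset.mem_coe.1 hcF⟩), hpc⟩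
  have hJeq := hImax (insert B I) hJind (Set.subset_insert _ _)
  exact hBI (hJeq ▸ Set.mem_insert _ _)

end Pointed


/-- If `I` is a maximal ideal independent family of cardinality `< 2^ℵ₀`, then for all
but finitely many `A ∈ I` the complemented filter `𝓕(I, A)` is an ultrafilter. -/
theorem finitely_many_non_ultra (I : Set (Set ℕ)) (hI : MaxIdealIndependent I)
    (hcard : #I < 2 ^ aleph0) :
    { A ∈ I | ¬ IsUltraOn (complFilter I A) }.Finite := by
  classical
  obtain ⟨hIind, hImax⟩ := hI
  by_contra hfin
  have hBadInf : {A ∈ I | ¬ IsUltraOn (complFilter I A)}.Infinite := hfin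
  have hPfin : {A ∈ I | PointedIn I A}.Finite :=
    Set.not_infinite.1 (pointed_not_infinite ⟨hIind, hImax⟩)
  have hNB : ({A ∈ I | ¬ IsUltraOn (complFilter I A)} \ {A ∈ I | PointedIn I A}).Infinite :=
    hBadInf.diff hPfin
  set emb := hNB.natEmbedding with hembdef
  set A : ℕ → Set ℕ := fun n => (emb n : Set ℕ) with hAdef
  have hAI : ∀ n, A n ∈ I := fun n => ((emb n).2.1).1
  have hbad : ∀ n, ¬ IsUltraOn (complFilter I (A n)) := fun n => ((emb n).2.1).2
  have hnp : ∀ n, ¬ PointedIn I (A n) := fun n hp => (emb n).2.2 ⟨hAI n, hp⟩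
  have hAinj : Function.Injective A := fun m n h => emb.injective (Subtype.coe_injective h)
  -- witnesses
  have hproper : ∀ n, complFilter I (A n) ≠ ⊥ := by
    intro n hbot
    have h0 : (∅ : Set ℕ) ∈ complFilter I (A n) := Filter.empty_mem_iff_bot.2 hbot
    rw [mem_complFilter_iff] at h0
    obtain ⟨F, hF, hsub⟩ := h0
    exact ((hIind (A n) (hAI n) F hF).nonempty).ne_empty (Set.subset_empty_iff.1 hsub)
  have hwit : ∀ n, ∃ W : Set ℕ, W ∉ complFilter I (A n) ∧ Wᶜ ∉ complFilter I (A n) := by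
    intro n
    have hb := hbad n
    simp only [IsUltraOn] at hb
    push_neg at hb
    exact hb ⟨hproper n⟩
  choose X hX1 hX2 using hwit
  -- blocks
  set Fn : ℕ → Finset (Set ℕ) := fun n => (Finset.range n).image A with hFndef
  have hFnmem : ∀ {i k : ℕ}, i < k → A i ∈ (↑(Fn k) : Set (Set ℕ)) := by
    intro i k h
    exact Finset.mem_coe.2 (Finset.mem_image.2 ⟨i, Finset.mem_range.2 h, rfl⟩)
  have hFn : ∀ n, ↑(Fn n) ⊆ I \ {A n} := by
    intro n c hc
    rw [Finset.mem_coe, hFndef, Finset.mem_image] at hc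
    obtain ⟨m, hm, rfl⟩ := hc
    refine ⟨hAI m, fun hh => ?_⟩
    have hmn := hAinj (Set.mem_singleton_iff.1 hh)
    have hlt := Finset.mem_range.1 hm
    omega
  set C : ℕ → Set ℕ := fun n => (A n \ ⋃₀ ↑(Fn n)) ∩ X n with hCdef
  have hCsub : ∀ n, C n ⊆ A n := fun n p hp => hp.1.1
  have hCdisj : ∀ {m n : ℕ}, m ≠ n → ∀ p, p ∈ C m → p ∈ C n → False := by
    intro m n hmn p hpm hpn
    rcases hmn.lt_or_gt with h | h
    · exact hpn.1.2 ⟨A m, hFnmem h, hCsub m hpm⟩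
    · exact hpm.1.2 ⟨A n, hFnmem h, hCsub n hpn⟩
  -- positivity
  have hposX : ∀ n (F : Finset (Set ℕ)), ↑F ⊆ I \ {A n} →
      ((A n \ ⋃₀ ↑F) ∩ X n).Nonempty := fun n F hF => pos_part I (hX2 n) hF
  have hposXc : ∀ n (F : Finset (Set ℕ)), ↑F ⊆ I \ {A n} →
      ((A n \ ⋃₀ ↑F) ∩ (X n)ᶜ).Infinite := by
    intro n F hF
    refine pos_infinite I (hnp n) (fun G hG => pos_part I ?_ hG) hF
    rw [compl_compl]
    exact hX1 n
  -- almost disjoint family of branch codes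
  set pre : (ℕ → Bool) → ℕ → List Bool := fun x n => List.ofFn (fun i : Fin n => x i) with hpredef
  have hpre : ∀ {x y : ℕ → Bool} {n m : ℕ}, pre x n = pre y m →
      n = m ∧ ∀ k, k < n → x k = y k := by
    intro x y n m h
    have hlen : n = m := by
      have := congrArg List.length h
      simpa [hpredef] using this
    subst hlen
    have h2 := List.ofFn_injective h
    exact ⟨rfl, fun k hk => congrFun h2 ⟨k, hk⟩⟩
  set code : (ℕ → Bool) → ℕ → ℕ := fun x n => Encodable.encode (pre x n) with hcodedef
  have hcodeinj : ∀ x, Function.Injective (code x) := fun x n m h =>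
    (hpre (Encodable.encode_injective h)).1
  set d : (ℕ → Bool) → Set ℕ := fun x => Set.range (code x) with hddef
  have hdinf : ∀ x, (d x).Infinite := fun x => Set.infinite_range_of_injective (hcodeinj x)
  have hdcap : ∀ {x y : ℕ → Bool}, x ≠ y → (d x ∩ d y).Finite := by
    intro x y hxy
    obtain ⟨N, hN⟩ := Function.ne_iff.1 hxy
    refine Set.Finite.subset ((Set.finite_Iic N).image (code x)) ?_
    rintro c ⟨⟨n, rfl⟩, ⟨m, hm⟩⟩
    obtain ⟨hnm, hag⟩ := hpre (Encodable.encode_injective hm)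
    refine ⟨n, ?_, rfl⟩
    simp only [Set.mem_Iic]
    by_contra hgt
    push_neg at hgt
    have hNm : N < m := by omega
    exact hN ((hag N hNm)).symm
  -- candidate sets
  set B : (ℕ → Bool) → Set ℕ := fun x => ⋃ n ∈ d x, C n with hBdef
  have hBmem : ∀ {x : ℕ → Bool} {p : ℕ}, p ∈ B x ↔ ∃ n ∈ d x, p ∈ C n := by
    intro x p
    simp [hBdef]
  -- property (1)
  have hB1 : ∀ (x : ℕ → Bool) (F : Finset (Set ℕ)), ↑F ⊆ I → (B x \ ⋃₀ ↑F).Infinite := by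
    intro x F hFI
    have hfinpre : {n | A n ∈ (↑F : Set (Set ℕ))}.Finite :=
      Set.Finite.preimage hAinj.injOn F.finite_toSet
    have hNN : ((d x) \ {n | A n ∈ (↑F : Set (Set ℕ))}).Infinite := (hdinf x).diff hfinpre
    have hpt : ∀ k : ↥((d x) \ {n | A n ∈ (↑F : Set (Set ℕ))}),
        ∃ p, p ∈ (A k.1 \ ⋃₀ ↑(Fn k.1 ∪ F)) ∩ X k.1 := by
      intro k
      refine hposX k.1 (Fn k.1 ∪ F) ?_
      rw [Finset.coe_union]
      refine Set.union_subset (hFn k.1) ?_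
      intro c hc
      refine ⟨hFI hc, ?_⟩
      intro hh
      exact k.2.2 (show A k.1 ∈ (↑F : Set (Set ℕ)) from (Set.mem_singleton_iff.1 hh) ▸ hc)
    choose pt hpt using hpt
    have hptC : ∀ k, pt k ∈ C k.1 := by
      intro k
      refine ⟨⟨(hpt k).1.1, fun hh => (hpt k).1.2 ?_⟩, (hpt k).2⟩
      rw [sUnion_coe_union]
      exact Set.mem_union_left _ hh
    have hptB : ∀ k, pt k ∈ B x \ ⋃₀ ↑F := by
      intro k
      refine ⟨hBmem.2 ⟨k.1, k.2.1, hptC k⟩, fun hh => (hpt k).1.2 ?_⟩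
      rw [sUnion_coe_union]
      exact Set.mem_union_right _ hh
    have hptinj : Function.Injective pt := by
      intro k l hkl
      by_contra hne
      have hklne : k.1 ≠ l.1 := fun h => hne (Subtype.ext h)
      exact hCdisj hklne (pt k) (hptC k) (hkl ▸ hptC l)
    have : Infinite ↥((d x) \ {n | A n ∈ (↑F : Set (Set ℕ))}) := hNN.to_subtype
    exact Set.infinite_of_injective_forall_mem hptinj hptB
  -- constraints whose left side is some A j catch nobody
  have hBrange : ∀ (j : ℕ) (F : Finset (Set ℕ)), ↑F ⊆ I \ {A j} →
      ∀ x : ℕ → Bool, (A j \ (⋃₀ ↑F ∪ B x)).Infinite := by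
    intro j F hF x
    have hleg : ↑(F ∪ Fn j) ⊆ I \ {A j} := by
      rw [Finset.coe_union]
      exact Set.union_subset hF (hFn j)
    refine Set.Infinite.mono ?_ (hposXc j (F ∪ Fn j) hleg)
    rintro p ⟨⟨hpA, hpU⟩, hpXc⟩
    rw [sUnion_coe_union] at hpU
    refine ⟨hpA, ?_⟩
    rintro (hpF | hpB)
    · exact hpU (Set.mem_union_left _ hpF)
    · obtain ⟨n, hnd, hpC⟩ := hBmem.1 hpB
      rcases Nat.lt_trichotomy n j with h | rfl | h
      · exact hpU (Set.mem_union_right _ ⟨A n, hFnmem h, hCsub n hpC⟩)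
      · exact hpXc hpC.2
      · exact hpC.1.2 ⟨A j, hFnmem h, hpA⟩
  -- other constraints catch at most one candidate
  have hBpair : ∀ A' : Set ℕ, A' ∈ I → (∀ j, A' ≠ A j) → ∀ F : Finset (Set ℕ),
      ↑F ⊆ I \ {A'} → ∀ x y : ℕ → Bool, x ≠ y →
      (A' \ (⋃₀ ↑F ∪ B x)).Finite → (A' \ (⋃₀ ↑F ∪ B y)).Finite → False := by
    intro A' hA'I hA'ne F hF x y hxy hcx hcy
    have hu : (d x ∩ d y).Finite := hdcap hxy
    set G : Finset (Set ℕ) := F ∪ hu.toFinset.image A with hGdef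
    have hG : ↑G ⊆ I \ {A'} := by
      rw [hGdef, Finset.coe_union]
      rintro c (hc | hc)
      · exact hF hc
      · rw [Finset.mem_coe, Finset.mem_image] at hc
        obtain ⟨n, _, rfl⟩ := hc
        exact ⟨hAI n, fun hh => (hA'ne n) (Set.mem_singleton_iff.1 hh).symm⟩
    have hbig : (A' \ ⋃₀ ↑G).Infinite := hIind A' hA'I G hG
    have hsub : A' \ ⋃₀ ↑G ⊆ (A' \ (⋃₀ ↑F ∪ B x)) ∪ (A' \ (⋃₀ ↑F ∪ B y)) := by
      intro p hp
      have hpF : p ∉ ⋃₀ (↑F : Set (Set ℕ)) := fun hh => hp.2 (by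
        rw [hGdef, sUnion_coe_union]; exact Set.mem_union_left _ hh)
      by_cases hbx : p ∈ B x
      · right
        refine ⟨hp.1, ?_⟩
        rintro (hh | hby)
        · exact hpF hh
        · obtain ⟨n, hnx, hpn⟩ := hBmem.1 hbx
          obtain ⟨m, hmy, hpm⟩ := hBmem.1 hby
          have hnm : n = m := by
            by_contra hne
            exact hCdisj hne p hpn hpm
          subst hnm
          apply hp.2
          rw [hGdef, sUnion_coe_union]
          refine Set.mem_union_right _ ⟨A n, ?_, hCsub n hpn⟩
          exact Finset.mem_coe.2 (Finset.mem_image_of_mem A (hu.mem_toFinset.2 ⟨hnx, hmy⟩))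
      · left
        exact ⟨hp.1, fun hh => hh.elim hpF hbx⟩
    exact hbig ((hcx.union hcy).subset hsub)
  -- injectivity of the candidate map
  have hBinj : Function.Injective B := by
    intro x y hBxy
    by_contra hxy
    have hdiffinf : ((d x) \ (d x ∩ d y)).Infinite := (hdinf x).diff (hdcap hxy)
    obtain ⟨n, hn⟩ := hdiffinf.nonempty
    have hnx : n ∈ d x := hn.1
    have hny : n ∉ d y := fun h => hn.2 ⟨hn.1, h⟩
    obtain ⟨p, hp⟩ := hposX n (Fn n) (hFn n)
    have hpBx : p ∈ B x := hBmem.2 ⟨n, hnx, hp⟩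
    rw [hBxy] at hpBx
    obtain ⟨m, hmy, hpm⟩ := hBmem.1 hpBx
    by_cases h : n = m
    · exact hny (h ▸ hmy)
    · exact hCdisj h p hp hpm
  -- the set of excluded candidates is small
  set K1 : Set (ℕ → Bool) := {x | B x ∈ I} with hK1def
  set K2 : Set (ℕ → Bool) := {x | ∃ A' : Set ℕ, ∃ F : Finset (Set ℕ),
    A' ∈ I ∧ ↑F ⊆ I \ {A'} ∧ (A' \ (⋃₀ ↑F ∪ B x)).Finite} with hK2def
  have hK1card : #K1 ≤ #I := by
    refine Cardinal.mk_le_of_injective (f := fun x : K1 => (⟨B x.1, x.2⟩ : I)) ?_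
    intro a b hab
    exact Subtype.ext (hBinj (congrArg Subtype.val hab))
  set CT := {c : Set ℕ × Finset (Set ℕ) // c.1 ∈ I ∧ ↑c.2 ⊆ I \ {c.1}} with hCTdef
  have hK2card : #K2 ≤ #CT := by
    have hz : ∀ z : K2, ∃ A' : Set ℕ, ∃ F : Finset (Set ℕ),
        A' ∈ I ∧ ↑F ⊆ I \ {A'} ∧ (A' \ (⋃₀ ↑F ∪ B z.1)).Finite := fun z => z.2
    choose cA cF h1 h2 h3 using hz
    refine Cardinal.mk_le_of_injective (f := fun z : K2 => (⟨(cA z, cF z), h1 z, h2 z⟩ : CT)) ?_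
    intro a b hab
    have heqA : cA a = cA b := congrArg (fun w : CT => w.1.1) hab
    have heqF : cF a = cF b := congrArg (fun w : CT => w.1.2) hab
    by_contra hne
    have hne' : a.1 ≠ b.1 := fun h => hne (Subtype.ext h)
    by_cases hra : ∃ j, cA a = A j
    · obtain ⟨j, hj⟩ := hra
      have hr := hBrange j (cF a) (by rw [← hj]; exact h2 a) a.1
      rw [← hj] at hr
      exact hr (h3 a)
    · push_neg at hra
      exact hBpair (cA a) (h1 a) hra (cF a) (h2 a) a.1 b.1 hne' (h3 a)
        (by rw [heqA, heqF]; exact h3 b)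
  -- cardinality of the constraint type
  set FS := {F : Finset (Set ℕ) | ↑F ⊆ I} with hFSdef
  have hFScard : #FS ≤ max ℵ₀ #I := by
    have hsurj : Function.Surjective (fun l : List I =>
        (⟨(l.map Subtype.val).toFinset, by
          intro c hc
          rw [Finset.mem_coe, List.mem_toFinset, List.mem_map] at hc
          obtain ⟨⟨c', hc'⟩, _, rfl⟩ := hc
          exact hc'⟩ : FS)) := by
      rintro ⟨F, hF⟩
      refine ⟨F.toList.pmap (fun a ha => (⟨a, ha⟩ : I))
        (fun a ha => hF (Finset.mem_coe.2 (Finset.mem_toList.1 ha))), ?_⟩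
      apply Subtype.ext
      simp only [List.map_pmap, List.pmap_eq_map, List.map_id']
      simp [Finset.toList_toFinset]
    exact le_trans (Cardinal.mk_le_of_surjective hsurj) (Cardinal.mk_list_le_max _)
  have hCTcard : #CT < 2 ^ aleph0 := by
    have hinj : Function.Injective (fun c : CT =>
        ((⟨c.1.1, c.2.1⟩ : I), (⟨c.1.2, c.2.2.trans Set.diff_subset⟩ : FS))) := by
      intro a b h
      have h1 : a.1.1 = b.1.1 := congrArg (fun w => (w.1 : Set ℕ)) h
      have h2 : a.1.2 = b.1.2 := congrArg (fun w => (w.2 : Finset (Set ℕ))) h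
      exact Subtype.ext (Prod.ext h1 h2)
    have hle : #CT ≤ #(↥I × ↥FS) := Cardinal.mk_le_of_injective hinj
    have heq : #(↥I × ↥FS) = #↥I * #↥FS := by
      rw [Cardinal.mk_prod, Cardinal.lift_id, Cardinal.lift_id]
    calc #CT ≤ #↥I * #↥FS := heq ▸ hle
      _ ≤ max ℵ₀ #↥I * max ℵ₀ #↥I := mul_le_mul' (le_max_right _ _) hFScard
      _ = max ℵ₀ #↥I := Cardinal.mul_eq_self (le_max_left _ _)
      _ < 2 ^ aleph0 := max_lt (Cardinal.cantor ℵ₀) hcard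
  have hKlt : #(↥(K1 ∪ K2)) < 2 ^ aleph0 :=
    lt_of_le_of_lt (Cardinal.mk_union_le _ _)
      (Cardinal.add_lt_of_lt (Cardinal.cantor ℵ₀).le
        (lt_of_le_of_lt hK1card hcard) (lt_of_le_of_lt hK2card hCTcard))
  have hKne : (K1 ∪ K2) ≠ (Set.univ : Set (ℕ → Bool)) := by
    intro h
    rw [h, Cardinal.mk_univ] at hKlt
    have hpow : #(ℕ → Bool) = 2 ^ aleph0 := by
      rw [← Cardinal.power_def, Cardinal.mk_bool, Cardinal.mk_nat]
    rw [hpow] at hKlt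
    exact lt_irrefl _ hKlt
  obtain ⟨x₀, hx₀⟩ := (Set.ne_univ_iff_exists_notMem _).1 hKne
  have hx₀1 : B x₀ ∉ I := fun h => hx₀ (Set.mem_union_left _ h)
  have hx₀2 : ∀ A' : Set ℕ, A' ∈ I → ∀ F : Finset (Set ℕ), ↑F ⊆ I \ {A'} →
      (A' \ (⋃₀ ↑F ∪ B x₀)).Infinite := by
    intro A' h1 F h2 hfin2
    exact hx₀ (Set.mem_union_right _ ⟨A', F, h1, h2, hfin2⟩)
  -- build the extension and contradict maximality
  have hJind : IdealIndependent (insert (B x₀) I) := by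
    intro A'' hA'' F hF
    rcases Set.mem_insert_iff.1 hA'' with rfl | hA''I
    · have hFI : ↑F ⊆ I := by
        intro c hc
        obtain ⟨hcJ, hcne⟩ := hF hc
        exact (Set.mem_insert_iff.1 hcJ).resolve_left (by simpa using hcne)
      exact hB1 x₀ F hFI
    · set F' := F.erase (B x₀) with hF'd
      have hF' : ↑F' ⊆ I \ {A''} := by
        intro c hc
        rw [Finset.mem_coe, hF'd, Finset.mem_erase] at hc
        obtain ⟨hcB, hcF⟩ := hc
        obtain ⟨hcJ, hcne⟩ := hF (Finset.mem_coe.2 hcF)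
        exact ⟨(Set.mem_insert_iff.1 hcJ).resolve_left hcB, hcne⟩
      by_cases hBF : B x₀ ∈ F
      · have hU : ⋃₀ (↑F : Set (Set ℕ)) = ⋃₀ ↑F' ∪ B x₀ := by
          conv_lhs => rw [← Finset.insert_erase hBF]
          rw [Finset.coe_insert, Set.sUnion_insert, Set.union_comm]
        rw [hU]
        exact hx₀2 A'' hA''I F' hF'
      · have hFF : F' = F := by rw [hF'd]; exact Finset.erase_eq_of_notMem hBF
        rw [← hFF]
        exact hIind A'' hA''I F' hF'
  have hJeq := hImax _ hJind (Set.subset_insert _ _)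
  exact hx₀1 (hJeq ▸ Set.mem_insert _ _)
end

section
/- Assume 𝔭 = 2^ℵ₀. Then there is a maximal ideal independent family 𝓘 of infinite subsets of ℕ with the property that for every A ∈ 𝓘 the complemented filter 𝓕(𝓘, A) is a p_𝔠-point (in particular, an ultrafilter). -/
open Cardinal Set Filter

/-- A family has the finite intersection property if every finite subfamily has
infinite intersection. -/
def HasFIP (Z : Set (Set ℕ)) : Prop :=
  ∀ F : Finset (Set ℕ), ↑F ⊆ Z → (⋂₀ (↑F : Set (Set ℕ))).Infinite

/-- `Y` is a pseudo-intersection of the family `Z`: an infinite set almost contained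
in every member of `Z`. -/
def IsPseudoIntersection (Y : Set ℕ) (Z : Set (Set ℕ)) : Prop :=
  Y.Infinite ∧ ∀ X ∈ Z, (Y \ X).Finite

/-- The pseudo-intersection number 𝔭: the least cardinality of a family of infinite
subsets of ℕ with the finite intersection property but no pseudo-intersection. -/
noncomputable def pNumber : Cardinal :=
  sInf { c : Cardinal | ∃ Z : Set (Set ℕ), (∀ A ∈ Z, A.Infinite) ∧ HasFIP Z ∧
    (¬ ∃ Y : Set ℕ, IsPseudoIntersection Y Z) ∧ c = #Z }

/-- A filter on ℕ is a `p_𝔠`-point if it is a nonprincipal ultrafilter and every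
subfamily of cardinality `< 2^ℵ₀` has a pseudo-intersection belonging to it. -/
def IsPcPoint (F : Filter ℕ) : Prop :=
  F ≠ ⊥ ∧ F ≤ Filter.cofinite ∧ (∀ D : Set ℕ, D ∈ F ∨ Dᶜ ∈ F) ∧
  ∀ Z : Set (Set ℕ), (∀ X ∈ Z, X ∈ F) → #Z < 2 ^ aleph0 →
    ∃ Y ∈ F, IsPseudoIntersection Y Z


/-! ### Auxiliary development -/

namespace MIIF

noncomputable section
open Classical

local notation "𝕔" => (2 : Cardinal) ^ (aleph0 : Cardinal)

lemma aleph0_lt_c : (aleph0 : Cardinal) < 𝕔 := Cardinal.cantor _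

lemma aleph0_le_c : (aleph0 : Cardinal) ≤ 𝕔 := aleph0_lt_c.le

/-- Splitting an infinite set into an infinite subset with infinite complement. -/
lemma exists_split {Q : Set ℕ} (hQ : Q.Infinite) :
    ∃ R, R ⊆ Q ∧ R.Infinite ∧ (Q \ R).Infinite := by
  let e := Set.Infinite.natEmbedding Q hQ
  refine ⟨Set.range (fun n => (e (2 * n) : ℕ)), ?_, ?_, ?_⟩
  · rintro x ⟨n, rfl⟩; exact (e (2 * n)).2
  · apply Set.infinite_range_of_injective
    intro a b hab
    have := e.injective (Subtype.ext hab)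
    omega
  · apply Set.Infinite.mono (s := Set.range (fun n => (e (2 * n + 1) : ℕ)))
    · rintro x ⟨n, rfl⟩
      refine ⟨(e (2 * n + 1)).2, ?_⟩
      rintro ⟨m, hm⟩
      have := e.injective (Subtype.ext hm)
      omega
    · apply Set.infinite_range_of_injective
      intro a b hab
      have := e.injective (Subtype.ext hab)
      omega

/-- The key consequence of `𝔭 = 𝕔`. -/
lemma pseudo_of_small (hp : pNumber = 𝕔) (Z : Set (Set ℕ)) (h1 : ∀ A ∈ Z, A.Infinite)
    (h2 : HasFIP Z) (h3 : #Z < 𝕔) : ∃ Y, IsPseudoIntersection Y Z := by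
  by_contra h4
  have : pNumber ≤ #Z := csInf_le' ⟨Z, h1, h2, h4, rfl⟩
  rw [hp] at this
  exact absurd h3 (not_lt.2 this)

/-- `J` does not finitely cover any cofinite set. -/
def CoInf (J : Set (Set ℕ)) : Prop :=
  ∀ F : Finset (Set ℕ), ↑F ⊆ J → ((⋃₀ ↑F)ᶜ : Set ℕ).Infinite

lemma card_lt_of_le {J : Set (Set ℕ)} (hcard : #J < 𝕔) {D : Set (Set ℕ)}
    (h : #D ≤ #J + 1) : #D < 𝕔 :=
  h.trans_lt (Cardinal.add_lt_of_lt aleph0_le_c hcard (one_lt_aleph0.trans aleph0_lt_c))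

lemma exists_thin (hp : pNumber = 2 ^ aleph0) {J : Set (Set ℕ)} (hJ : IdealIndependent J) (hcard : #J < 𝕔)
    {A : Set ℕ} (hA : A ∈ J) :
    ∃ Q : Set ℕ, Q.Infinite ∧ Q ⊆ A ∧ ∀ C ∈ J, C ≠ A → (Q ∩ C).Finite := by
  have hAinf : A.Infinite := by
    have := hJ A hA ∅ (by simp)
    simpa using this
  set D : Set (Set ℕ) := (fun C => A \ C) '' (insert ∅ (J \ {A})) with hD
  have hAD : A ∈ D := ⟨∅, mem_insert _ _, by simp⟩
  have hinf : ∀ g ∈ D, g.Infinite := by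
    rintro g ⟨C, hC, rfl⟩
    rcases hC with rfl | hC
    · simpa using hAinf
    · have := hJ A hA {C} (by simpa using hC)
      simpa using this
  have hfip : HasFIP D := by
    intro F hF
    set u : Set ℕ → Set ℕ := fun g =>
      if h : ∃ C ∈ insert ∅ (J \ {A}), g = A \ C then h.choose else ∅ with hu
    have hu1 : ∀ g ∈ F, u g ∈ insert ∅ (J \ {A}) ∧ g = A \ u g := by
      intro g hg
      have h : ∃ C ∈ insert ∅ (J \ {A}), g = A \ C := by
        obtain ⟨C, hC, hEq⟩ := hF hg; exact ⟨C, hC, hEq.symm⟩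
      simp only [hu, dif_pos h]
      exact ⟨h.choose_spec.1, h.choose_spec.2⟩
    set F₂ : Finset (Set ℕ) := (F.image u).erase ∅ with hF₂def
    have hF₂ : ↑F₂ ⊆ J \ {A} := by
      intro x hx
      simp only [hF₂def, Finset.coe_erase, Set.mem_diff, Finset.mem_coe,
        Finset.mem_image, Set.mem_singleton_iff] at hx
      obtain ⟨⟨g, hg, rfl⟩, hne⟩ := hx
      rcases (hu1 g hg).1 with h0 | hC
      · exact absurd h0 hne
      · exact hC
    have key : A \ ⋃₀ ↑F₂ ⊆ ⋂₀ ↑F := by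
      rintro x ⟨hxA, hxU⟩ g hg
      obtain ⟨hmem, hEq⟩ := hu1 g hg
      by_cases hug : u g = ∅
      · rw [hEq, hug, diff_empty]; exact hxA
      · have hugF₂ : u g ∈ F₂ := Finset.mem_erase.2 ⟨hug, Finset.mem_image_of_mem u hg⟩
        rw [hEq]
        exact ⟨hxA, fun hxu => hxU ⟨u g, hugF₂, hxu⟩⟩
    exact (hJ A hA F₂ hF₂).mono key
  have hcardD : #D < 𝕔 := by
    refine card_lt_of_le hcard ?_
    calc #D ≤ #(insert ∅ (J \ {A}) : Set (Set ℕ)) := mk_image_le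
    _ ≤ #(J \ {A} : Set (Set ℕ)) + 1 := mk_insert_le
    _ ≤ #J + 1 := by
        exact add_le_add_left (mk_le_mk_of_subset diff_subset) 1
  obtain ⟨P, hPinf, hP⟩ := pseudo_of_small hp D hinf hfip hcardD
  have hPA : (P \ A).Finite := hP A hAD
  refine ⟨P ∩ A, ?_, inter_subset_right, ?_⟩
  · intro h
    have : P.Finite := by
      refine ((h.union hPA).subset ?_)
      intro x hx
      by_cases hxA : x ∈ A
      · exact Or.inl ⟨hx, hxA⟩
      · exact Or.inr ⟨hx, hxA⟩
    exact hPinf this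
  · intro C hC hCA
    refine (hP (A \ C) ⟨C, mem_insert_of_mem _ ⟨hC, hCA⟩, rfl⟩).subset ?_
    rintro x ⟨⟨hxP, hxA⟩, hxC⟩
    exact ⟨hxP, fun h => h.2 hxC⟩

lemma exists_cothin (hp : pNumber = 2 ^ aleph0) {J : Set (Set ℕ)} (hCo : CoInf J) (hcard : #J < 𝕔) :
    ∃ P : Set ℕ, P.Infinite ∧ ∀ C ∈ J, (P ∩ C).Finite := by
  set D : Set (Set ℕ) := (fun C => Cᶜ) '' J with hD
  have hinf : ∀ g ∈ D, g.Infinite := by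
    rintro g ⟨C, hC, rfl⟩
    have := hCo {C} (by simpa using hC)
    simpa using this
  have hfip : HasFIP D := by
    intro F hF
    set u : Set ℕ → Set ℕ := fun g => if h : ∃ C ∈ J, g = Cᶜ then h.choose else ∅ with hu
    have hu1 : ∀ g ∈ F, u g ∈ J ∧ g = (u g)ᶜ := by
      intro g hg
      have h : ∃ C ∈ J, g = Cᶜ := by
        obtain ⟨C, hC, hEq⟩ := hF hg; exact ⟨C, hC, hEq.symm⟩
      simp only [hu, dif_pos h]
      exact ⟨h.choose_spec.1, h.choose_spec.2⟩
    set F₂ : Finset (Set ℕ) := F.image u with hF₂def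
    have hF₂ : ↑F₂ ⊆ J := by
      intro x hx
      obtain ⟨g, hg, rfl⟩ := Finset.mem_image.1 (Finset.mem_coe.1 hx)
      exact (hu1 g hg).1
    have key : (⋃₀ (↑F₂ : Set (Set ℕ)))ᶜ ⊆ ⋂₀ (↑F : Set (Set ℕ)) := by
      intro x hx g hg
      obtain ⟨hmem, hEq⟩ := hu1 g hg
      rw [hEq]
      intro hxu
      exact hx ⟨u g, Finset.mem_image_of_mem u hg, hxu⟩
    exact (hCo F₂ hF₂).mono key
  have hcardD : #D < 𝕔 := card_lt_of_le hcard (mk_image_le.trans (self_le_add_right _ _))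
  obtain ⟨P, hPinf, hP⟩ := pseudo_of_small hp D hinf hfip hcardD
  refine ⟨P, hPinf, fun C hC => ?_⟩
  refine (hP Cᶜ ⟨C, hC, rfl⟩).subset ?_
  rintro x ⟨hxP, hxC⟩
  exact ⟨hxP, fun h => h hxC⟩

lemma inter_sUnion_finite {E : Set ℕ} (F : Finset (Set ℕ))
    (h : ∀ g ∈ F, (E ∩ g).Finite) : (E ∩ ⋃₀ ↑F).Finite := by
  have hsub : E ∩ ⋃₀ ↑F ⊆ ⋃ g ∈ (↑F : Set (Set ℕ)), E ∩ g := by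
    rintro x ⟨hx, g, hg, hxg⟩
    exact mem_biUnion hg ⟨hx, hxg⟩
  exact (Set.Finite.biUnion F.finite_toSet (fun g hg => h g (Finset.mem_coe.1 hg))).subset hsub

lemma addOne (hp : pNumber = 2 ^ aleph0) {J : Set (Set ℕ)} (hJ : IdealIndependent J) (hCo : CoInf J) (hcard : #J < 𝕔)
    {A S Q Q' : Set ℕ} (hA : A ∈ J) (hS : S ⊆ A)
    (hQ : Q.Infinite) (hQA : Q ⊆ A \ S)
    (hQ' : Q'.Infinite) (hQ'A : Q' ⊆ A \ (S ∪ Q))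
    (thinQ : ∀ C ∈ J, C ≠ A → (Q ∩ C).Finite)
    (thinQ' : ∀ C ∈ J, C ≠ A → (Q' ∩ C).Finite) :
    ∃ B : Set ℕ, S ∪ Q ⊆ B ∧ A \ B = (A \ S) \ Q ∧
      IdealIndependent (insert B J) ∧ CoInf (insert B J) := by
  obtain ⟨P, hPinf, hPthin⟩ := exists_cothin hp hCo hcard
  have hPA : (P \ A).Infinite := by
    have h1 : (P \ (P ∩ A)).Infinite := hPinf.diff (hPthin A hA)
    have h2 : P \ (P ∩ A) = P \ A := by ext x; simp
    rwa [h2] at h1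
  obtain ⟨E, hEsub, hEinf, hE''inf⟩ := exists_split hPA
  set E'' : Set ℕ := (P \ A) \ E with hE''def
  have hEA : ∀ x ∈ E, x ∉ A := fun x hx => (hEsub hx).2
  have hE''A : ∀ x ∈ E'', x ∉ A := fun x hx => hx.1.2
  have hEE'' : ∀ x ∈ E'', x ∉ E := fun x hx => hx.2
  have hEthin : ∀ C ∈ J, (E ∩ C).Finite := fun C hC =>
    (hPthin C hC).subset (inter_subset_inter_left _ (fun x hx => (hEsub hx).1))
  have hE''thin : ∀ C ∈ J, (E'' ∩ C).Finite := fun C hC =>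
    (hPthin C hC).subset (inter_subset_inter_left _ (fun x hx => hx.1.1))
  refine ⟨S ∪ Q ∪ E, fun x hx => Or.inl hx, ?_, ?_, ?_⟩
  · ext x
    constructor
    · rintro ⟨hxA, hxB⟩
      exact ⟨⟨hxA, fun h => hxB (Or.inl (Or.inl h))⟩, fun h => hxB (Or.inl (Or.inr h))⟩
    · rintro ⟨⟨hxA, hxS⟩, hxQ⟩
      refine ⟨hxA, ?_⟩
      rintro ((h | h) | h)
      exacts [hxS h, hxQ h, hEA x h hxA]
  · -- ideal independence
    intro D hD F hF
    set B : Set ℕ := S ∪ Q ∪ E with hB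
    have hBA : ∀ x ∈ B, x ∈ A ∨ x ∈ E := by
      rintro x (h | h)
      · rcases h with h | h
        · exact Or.inl (hS h)
        · exact Or.inl (hQA h).1
      · exact Or.inr h
    set F' : Finset (Set ℕ) := F.erase B with hF'
    have hF'J : ∀ g ∈ F', g ∈ J ∧ g ≠ D := by
      intro g hg
      have h1 := Finset.ne_of_mem_erase hg
      have h2 := hF (Finset.mem_coe.2 (Finset.mem_of_mem_erase hg))
      rcases h2 with ⟨h2, h3⟩
      rcases h2 with rfl | h2
      · exact absurd rfl h1
      · exact ⟨h2, h3⟩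
    have hUnion : ⋃₀ (↑F : Set (Set ℕ)) ⊆ B ∪ ⋃₀ (↑F' : Set (Set ℕ)) := by
      rintro x ⟨g, hg, hxg⟩
      by_cases hgB : g = B
      · exact Or.inl (hgB ▸ hxg)
      · exact Or.inr ⟨g, Finset.mem_coe.2 (Finset.mem_erase.2 ⟨hgB, Finset.mem_coe.1 hg⟩), hxg⟩
    rcases hD with rfl | hDJ
    · -- D = B
      have hFJ : ∀ g ∈ F, g ∈ J := by
        intro g hg
        have h2 := hF (Finset.mem_coe.2 hg)
        rcases h2 with ⟨h2, h3⟩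
        rcases h2 with rfl | h2
        · exact absurd rfl h3
        · exact h2
      have hfin : (E ∩ ⋃₀ ↑F).Finite := inter_sUnion_finite F (fun g hg => hEthin g (hFJ g hg))
      refine (hEinf.diff hfin).mono ?_
      rintro x ⟨hxE, hxU⟩
      exact ⟨Or.inr hxE, fun h => hxU ⟨hxE, h⟩⟩
    · by_cases hDA : D = A
      · subst hDA
        have hF'DA : ↑F' ⊆ J \ {D} := by
          intro g hg
          obtain ⟨h1, h2⟩ := hF'J g (Finset.mem_coe.1 hg)
          exact ⟨h1, h2⟩
        have h1 : (Q' ∩ ⋃₀ ↑F').Finite :=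
          inter_sUnion_finite F' (fun g hg => thinQ' g (hF'J g hg).1 (hF'J g hg).2)
        refine (hQ'.diff h1).mono ?_
        rintro x ⟨hxQ', hxU⟩
        obtain ⟨hxA, hxSQ⟩ := hQ'A hxQ'
        refine ⟨hxA, fun hxF => ?_⟩
        rcases hUnion hxF with h | h
        · rcases h with h | h
          · exact hxSQ h
          · exact hEA x h hxA
        · exact hxU ⟨hxQ', h⟩
      · -- D ∈ J, D ≠ A
        have hsub2 : ↑(insert A F') ⊆ J \ {D} := by
          intro g hg
          rcases Finset.mem_insert.1 (Finset.mem_coe.1 hg) with rfl | hg'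
          · exact ⟨hA, fun h => hDA (by rw [← h])⟩
          · obtain ⟨h1, h2⟩ := hF'J g hg'
            exact ⟨h1, h2⟩
        have h1 := hJ D hDJ (insert A F') hsub2
        have h2 : (E ∩ D).Finite := hEthin D hDJ
        refine (h1.diff h2).mono ?_
        rintro x ⟨⟨hxD, hxU⟩, hxE⟩
        have hxA : x ∉ A := fun h => hxU ⟨A, Finset.mem_coe.2 (Finset.mem_insert_self _ _), h⟩
        refine ⟨hxD, fun hxF => ?_⟩
        rcases hUnion hxF with h | h
        · rcases hBA x h with h' | h'
          · exact hxA h'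
          · exact hxE ⟨h', hxD⟩
        · obtain ⟨g, hg, hxg⟩ := h
          exact hxU ⟨g, Finset.mem_coe.2 (Finset.mem_insert_of_mem (Finset.mem_coe.1 hg)), hxg⟩
  · -- CoInf
    intro F hF
    set B : Set ℕ := S ∪ Q ∪ E with hB
    set F' : Finset (Set ℕ) := F.erase B with hF'
    have hF'J : ∀ g ∈ F', g ∈ J := by
      intro g hg
      have h1 := Finset.ne_of_mem_erase hg
      have h2 := hF (Finset.mem_coe.2 (Finset.mem_of_mem_erase hg))
      rcases h2 with rfl | h2
      · exact absurd rfl h1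
      · exact h2
    have h1 : (E'' ∩ ⋃₀ ↑F').Finite := inter_sUnion_finite F' (fun g hg => hE''thin g (hF'J g hg))
    refine (hE''inf.diff h1).mono ?_
    rintro x ⟨hxE'', hxU⟩
    rintro ⟨g, hg, hxg⟩
    by_cases hgB : g = B
    · subst hgB
      rcases hxg with h | h
      · rcases h with h | h
        · exact hE''A x hxE'' (hS h)
        · exact hE''A x hxE'' (hQA h).1
      · exact hEE'' x hxE'' h
    · exact hxU ⟨hxE'', ⟨g, Finset.mem_coe.2 (Finset.mem_erase.2 ⟨hgB, Finset.mem_coe.1 hg⟩), hxg⟩⟩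

abbrev tau : Type := Finset ℕ × Finset (Finset ℕ)

def tEquiv : tau ≃ ℕ := Denumerable.eqv tau

/-- `F` cut down to a "code" of `X`. -/
def cut (X : Set ℕ) (F : Finset ℕ) : Finset ℕ :=
  @Finset.filter _ (· ∈ X) (Classical.decPred _) F

lemma mem_cut {X : Set ℕ} {F : Finset ℕ} {m : ℕ} : m ∈ cut X F ↔ m ∈ F ∧ m ∈ X := by
  simp [cut, Finset.mem_filter]

def indSet (X : Set ℕ) : Set tau := {p : tau | cut X p.1 ∈ p.2}

def ind (X : Set ℕ) : Set ℕ := tEquiv '' indSet X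

lemma mem_ind {X : Set ℕ} {p : tau} : tEquiv p ∈ ind X ↔ p ∈ indSet X := by
  constructor
  · rintro ⟨p', hp', h⟩
    rwa [tEquiv.injective h] at hp'
  · intro h
    exact ⟨p, h, rfl⟩

lemma ind_core (s : Finset (Set ℕ)) (f : Set ℕ → Prop) :
    {p : tau | ∀ X ∈ s, (cut X p.1 ∈ p.2 ↔ f X)}.Infinite := by
  classical
  set g : Set ℕ × Set ℕ → ℕ := fun q => if h : ∃ m, ¬(m ∈ q.1 ↔ m ∈ q.2) then h.choose else 0
    with hg
  set F₀ : Finset ℕ := (s ×ˢ s).image g with hF₀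
  have hsep : ∀ X ∈ s, ∀ Y ∈ s, X ≠ Y → ∃ m ∈ F₀, ¬(m ∈ X ↔ m ∈ Y) := by
    intro X hX Y hY hXY
    have hex : ∃ m, ¬(m ∈ X ↔ m ∈ Y) := by
      by_contra h
      push_neg at h
      exact hXY (Set.ext h)
    refine ⟨g (X, Y), Finset.mem_image_of_mem g (Finset.mem_product.2 ⟨hX, hY⟩), ?_⟩
    simp only [hg, dif_pos hex]
    exact hex.choose_spec
  set M : ℕ := F₀.sup id + 1 with hM
  have hF₀M : ∀ m ∈ F₀, m < M := fun m hm =>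
    Nat.lt_succ_of_le (Finset.le_sup (f := id) hm)
  set As : ℕ → Finset (Finset ℕ) := fun k =>
    (s.filter f).image (fun X => cut X (Finset.range (M + k))) with hAs
  set q : ℕ → tau := fun k => (Finset.range (M + k), As k) with hq
  refine Set.infinite_of_injective_forall_mem (f := q) ?_ ?_
  · intro a b hab
    have : Finset.range (M + a) = Finset.range (M + b) := congrArg Prod.fst hab
    have : M + a = M + b := by
      by_contra hne
      rcases Nat.lt_or_ge (M + a) (M + b) with h | h
      · have h1 : M + a ∈ Finset.range (M + b) := Finset.mem_range.2 h
        rw [← this] at h1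
        exact absurd (Finset.mem_range.1 h1) (lt_irrefl _)
      · rcases Nat.lt_or_ge (M + b) (M + a) with h' | h'
        · have h1 : M + b ∈ Finset.range (M + a) := Finset.mem_range.2 h'
          rw [this] at h1
          exact absurd (Finset.mem_range.1 h1) (lt_irrefl _)
        · exact hne (by omega)
    omega
  · intro k X hX
    constructor
    · intro hmem
      obtain ⟨Y, hY, hEq⟩ := Finset.mem_image.1 hmem
      obtain ⟨hYs, hfY⟩ := Finset.mem_filter.1 hY
      by_cases hXY : X = Y
      · rwa [hXY]
      · obtain ⟨m, hmF₀, hm⟩ := hsep X hX Y hYs (hXY)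
        have hmrange : m ∈ Finset.range (M + k) :=
          Finset.mem_range.2 ((hF₀M m hmF₀).trans_le (Nat.le_add_right M k))
        exfalso
        apply hm
        constructor
        · intro hmX
          have : m ∈ cut X (Finset.range (M + k)) := mem_cut.2 ⟨hmrange, hmX⟩
          rw [← hEq] at this
          exact (mem_cut.1 this).2
        · intro hmY
          have : m ∈ cut Y (Finset.range (M + k)) := mem_cut.2 ⟨hmrange, hmY⟩
          rw [hEq] at this
          exact (mem_cut.1 this).2
    · intro hfX
      exact Finset.mem_image_of_mem _ (Finset.mem_filter.2 ⟨hX, hfX⟩)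

lemma ind_infinite (X : Set ℕ) : (ind X).Infinite := by
  have h := ind_core {X} (fun _ => True)
  have hsub : {p : tau | ∀ Y ∈ ({X} : Finset (Set ℕ)), (cut Y p.1 ∈ p.2 ↔ True)} ⊆ indSet X := by
    intro p hp
    exact (hp X (Finset.mem_singleton_self X)).2 trivial
  exact ((h.mono hsub).image (tEquiv.injective.injOn))

lemma ind_compl_infinite (X : Set ℕ) : ((ind X)ᶜ : Set ℕ).Infinite := by
  have h := ind_core {X} (fun _ => False)
  refine ((h.image (tEquiv.injective.injOn)).mono ?_)
  rintro n ⟨p, hp, rfl⟩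
  intro hmem
  exact (hp X (Finset.mem_singleton_self X)).1 (mem_ind.1 hmem)


/-! ### Construction machinery -/

/-! ### The underlying well-order of length `𝔠` and the bookkeeping function -/

abbrev W : Type := ((2 : Cardinal.{0}) ^ aleph0).ord.ToType

abbrev TaskT : Type := Set ℕ × Set ℕ × ℕ

lemma cardW : #W = (2 : Cardinal.{0}) ^ aleph0 := mk_ord_toType _

lemma nonemptyW : Nonempty W := by
  rw [← mk_ne_zero_iff, cardW]
  exact (aleph0_pos.trans aleph0_lt_c).ne'

lemma card_Iic_lt (α : W) : #(Iic α) < (2 : Cardinal.{0}) ^ aleph0 := by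
  have h1 : (Iic α : Set W) = insert α (Iio α) := by
    ext x
    simp [le_iff_lt_or_eq, or_comm]
  rw [h1]
  exact mk_insert_le.trans_lt
    (Cardinal.add_lt_of_lt aleph0_le_c (mk_Iio_ord_toType α) (one_lt_aleph0.trans aleph0_lt_c))

lemma card_task : #(TaskT × W) = #W := by
  apply le_antisymm
  · have h1 : #(TaskT × W) = (2 ^ ℵ₀ * (2 ^ ℵ₀ * ℵ₀)) * 2 ^ ℵ₀ := by
      simp [mk_prod, lift_id, mk_set, mk_nat, cardW]
    rw [h1, cardW]
    have h2 : (2 : Cardinal.{0}) ^ ℵ₀ * ℵ₀ = 2 ^ ℵ₀ :=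
      Cardinal.mul_eq_left aleph0_le_c aleph0_le_c aleph0_ne_zero
    rw [h2, Cardinal.mul_eq_self aleph0_le_c, Cardinal.mul_eq_self aleph0_le_c]
  · exact mk_le_of_injective (f := fun w : W => ((∅, ∅, 0), w))
      (fun a b hab => congrArg Prod.snd hab)

def taskEquiv : TaskT × W ≃ W := Classical.choice (Cardinal.eq.mp card_task)

def task : W → TaskT := fun α => (taskEquiv.symm α).1

lemma task_unbounded (t : TaskT) (α₀ : W) : ∃ α, α₀ < α ∧ task α = t := by
  by_contra h
  push_neg at h
  have hle : ∀ w : W, taskEquiv (t, w) ≤ α₀ := by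
    intro w
    by_contra hw
    push_neg at hw
    exact h _ hw (by simp [task, Equiv.symm_apply_apply])
  have hW : #W ≤ #(Iic α₀) := by
    refine mk_le_of_injective (f := fun w : W => (⟨taskEquiv (t, w), hle w⟩ : Iic α₀)) ?_
    intro a b hab
    have h1 : taskEquiv (t, a) = taskEquiv (t, b) := congrArg Subtype.val hab
    have h2 := taskEquiv.injective h1
    exact (Prod.ext_iff.1 h2).2
  rw [cardW] at hW
  exact absurd (hW.trans_lt (card_Iic_lt α₀)) (lt_irrefl _)

/-! ### The base member and the inductive construction -/

def Ev : Set ℕ := {n | Even n}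

lemma Ev_infinite : Ev.Infinite := by
  refine Set.infinite_of_injective_forall_mem (f := fun k : ℕ => 2 * k) ?_ ?_
  · intro a b hab; dsimp only at hab; omega
  · intro k
    show Even (2 * k)
    exact ⟨k, by omega⟩

lemma Ev_compl_infinite : (Evᶜ : Set ℕ).Infinite := by
  refine Set.infinite_of_injective_forall_mem (f := fun k : ℕ => 2 * k + 1) ?_ ?_
  · intro a b hab; dsimp only at hab; omega
  · intro k
    simp only [Ev, mem_compl_iff, mem_setOf_eq, Nat.even_iff]
    omega

lemma II_Ev : IdealIndependent {Ev} := by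
  intro A hA F hF
  rcases hA with rfl
  have hF0 : F = ∅ := by
    rcases Finset.eq_empty_or_nonempty F with h | h
    · exact h
    · obtain ⟨g, hg⟩ := h
      exact absurd (hF (Finset.mem_coe.2 hg)) (by simp)
  subst hF0
  simpa using Ev_infinite

lemma CoInf_Ev : CoInf {Ev} := by
  intro F hF
  refine Ev_compl_infinite.mono ?_
  intro x hx
  rintro ⟨g, hg, hxg⟩
  rcases hF hg with rfl
  exact hx hxg

/-- The full specification of one construction step. -/
def BigPred (J : Set (Set ℕ)) (A X : Set ℕ) (n : ℕ) (J' : Set (Set ℕ)) : Prop :=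
  J ⊆ J' ∧ (J' \ J).Finite ∧ IdealIndependent J' ∧ CoInf J' ∧
  (∃ B ∈ J', B ≠ A ∧ (A \ B).Infinite ∧ ∀ C ∈ J, C ≠ A → ((A \ B) ∩ C).Finite) ∧
  ((∃ F : Finset (Set ℕ), ↑F ⊆ J' \ {A} ∧ A \ ⋃₀ ↑F ⊆ X) ∨
   (∃ F : Finset (Set ℕ), ↑F ⊆ J' \ {A} ∧ A ∩ X ⊆ ⋃₀ ↑F)) ∧
  (X ∈ J' ∨ ¬ IdealIndependent (J ∪ {X}) ∨
    ∃ F : Finset (Set ℕ), ↑F ⊆ J ∧ ((X ∪ ⋃₀ ↑F)ᶜ : Set ℕ).Finite) ∧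
  (n ∈ A → ∃ C ∈ J', C ≠ A ∧ n ∈ C)

def effA (J : Set (Set ℕ)) (t : TaskT) : Set ℕ := if t.1 ∈ J then t.1 else Ev

def stepSet (J : Set (Set ℕ)) (t : TaskT) : Set (Set ℕ) :=
  if h : ∃ J', BigPred J (effA J t) t.2.1 t.2.2 J' then h.choose \ J else ∅

lemma stepSet_spec {J : Set (Set ℕ)} {t : TaskT}
    (h : ∃ J', BigPred J (effA J t) t.2.1 t.2.2 J') :
    BigPred J (effA J t) t.2.1 t.2.2 (J ∪ stepSet J t) := by
  rw [stepSet, dif_pos h]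
  rw [Set.union_diff_cancel h.choose_spec.1]
  exact h.choose_spec

lemma stepSet_finite (J : Set (Set ℕ)) (t : TaskT) : (stepSet J t).Finite := by
  rw [stepSet]
  split_ifs with h
  · exact h.choose_spec.2.1
  · exact finite_empty

def news : W → Set (Set ℕ) :=
  (wellFounded_lt (α := W)).fix fun α rec =>
    stepSet (insert Ev (⋃ β : W, ⋃ h : β < α, rec β h)) (task α)

def famAt (α : W) : Set (Set ℕ) := insert Ev (⋃ β : W, ⋃ _ : β < α, news β)

def fam : Set (Set ℕ) := insert Ev (⋃ β : W, news β)

lemma news_eq (α : W) : news α = stepSet (famAt α) (task α) := by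
  rw [news, WellFounded.fix_eq]
  rfl

lemma news_finite (β : W) : (news β).Finite := by
  rw [news_eq]
  exact stepSet_finite _ _

lemma Ev_mem_famAt (α : W) : Ev ∈ famAt α := mem_insert _ _

lemma Ev_mem_fam : Ev ∈ fam := mem_insert _ _

lemma famAt_mono {β γ : W} (h : β ≤ γ) : famAt β ⊆ famAt γ := by
  rintro x (rfl | hx)
  · exact mem_insert _ _
  · obtain ⟨s, ⟨δ, rfl⟩, hs⟩ := hx
    simp only [mem_iUnion] at hs
    obtain ⟨hδ, hx⟩ := hs
    exact Or.inr (mem_iUnion.2 ⟨δ, mem_iUnion.2 ⟨hδ.trans_le h, hx⟩⟩)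

lemma news_subset_famAt {β γ : W} (h : β < γ) : news β ⊆ famAt γ := by
  intro x hx
  exact Or.inr (mem_iUnion.2 ⟨β, mem_iUnion.2 ⟨h, hx⟩⟩)

lemma stage_mono {β γ : W} (h : β ≤ γ) : famAt β ∪ news β ⊆ famAt γ ∪ news γ := by
  rintro x (hx | hx)
  · exact Or.inl (famAt_mono h hx)
  · rcases lt_or_eq_of_le h with h' | rfl
    · exact Or.inl (news_subset_famAt h' hx)
    · exact Or.inr hx

lemma stage_subset_fam (α : W) : famAt α ∪ news α ⊆ fam := by
  rintro x (hx | hx)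
  · rcases hx with rfl | hx
    · exact Ev_mem_fam
    · obtain ⟨s, ⟨δ, rfl⟩, hs⟩ := hx
      simp only [mem_iUnion] at hs
      exact Or.inr (mem_iUnion.2 ⟨δ, hs.2⟩)
  · exact Or.inr (mem_iUnion.2 ⟨α, hx⟩)

lemma famAt_subset_fam (α : W) : famAt α ⊆ fam :=
  (subset_union_left).trans (stage_subset_fam α)

lemma card_famAt_lt (α : W) : #(famAt α) < 𝕔 := by
  have h1 : #(⋃ β ∈ (Iio α : Set W), news β) ≤ #(Iio α : Set W) * ℵ₀ := by
    refine (mk_biUnion_le news (Iio α)).trans ?_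
    refine mul_le_mul_right ?_ _
    rcases isEmpty_or_nonempty (Iio α : Set W) with h | h
    · rw [ciSup_of_empty]
      exact bot_le
    · refine ciSup_le' (fun x => ?_)
      haveI := ((news_finite (x : W)).countable).to_subtype
      exact Cardinal.mk_le_aleph0
  have h2 : (⋃ β : W, ⋃ _ : β < α, news β) = ⋃ β ∈ (Iio α : Set W), news β := by
    ext x; simp [mem_iUnion]
  have h3 : #(famAt α) ≤ #(⋃ β ∈ (Iio α : Set W), news β) + 1 := by
    rw [famAt, h2]
    exact mk_insert_le
  refine h3.trans_lt ?_
  refine Cardinal.add_lt_of_lt aleph0_le_c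
    (h1.trans_lt (Cardinal.mul_lt_of_lt aleph0_le_c (mk_Iio_ord_toType α) aleph0_lt_c))
    (one_lt_aleph0.trans aleph0_lt_c)

lemma card_fam_le : #fam ≤ 𝕔 := by
  have h := mk_le_mk_of_subset (subset_univ fam)
  rw [mk_univ] at h
  rwa [mk_set, mk_nat] at h


lemma card_insert_lt {J : Set (Set ℕ)} (hcard : #J < 𝕔) (B : Set ℕ) :
    #(insert B J : Set (Set ℕ)) < 𝕔 :=
  card_lt_of_le hcard mk_insert_le

lemma mainStep (hp : pNumber = 2 ^ aleph0) {J : Set (Set ℕ)} (hJ : IdealIndependent J) (hCo : CoInf J)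
    (hcard : #J < 𝕔) {A : Set ℕ} (hA : A ∈ J) (X : Set ℕ) (n : ℕ) :
    ∃ J' : Set (Set ℕ), J ⊆ J' ∧ (J' \ J).Finite ∧ IdealIndependent J' ∧ CoInf J' ∧
      (∃ B ∈ J', B ≠ A ∧ (A \ B).Infinite ∧ ∀ C ∈ J, C ≠ A → ((A \ B) ∩ C).Finite) ∧
      ((∃ F : Finset (Set ℕ), ↑F ⊆ J' \ {A} ∧ A \ ⋃₀ ↑F ⊆ X) ∨
       (∃ F : Finset (Set ℕ), ↑F ⊆ J' \ {A} ∧ A ∩ X ⊆ ⋃₀ ↑F)) ∧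
      (X ∈ J' ∨ ¬ IdealIndependent (J ∪ {X}) ∨
        ∃ F : Finset (Set ℕ), ↑F ⊆ J ∧ ((X ∪ ⋃₀ ↑F)ᶜ : Set ℕ).Finite) ∧
      (n ∈ A → ∃ C ∈ J', C ≠ A ∧ n ∈ C) := by
  -- Step 0 : try to add X itself (maximality step)
  obtain ⟨J₀, hJ0sub, hJ0fin, hJ0II, hJ0Co, hJ0card, hT3⟩ :
      ∃ J₀ : Set (Set ℕ), J ⊆ J₀ ∧ (J₀ \ J).Finite ∧ IdealIndependent J₀ ∧ CoInf J₀ ∧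
        Cardinal.mk J₀ < 𝕔 ∧ (X ∈ J₀ ∨ ¬ IdealIndependent (J ∪ {X}) ∨
          ∃ F : Finset (Set ℕ), ↑F ⊆ J ∧ ((X ∪ ⋃₀ ↑F)ᶜ : Set ℕ).Finite) := by
    by_cases h3 : IdealIndependent (insert X J) ∧ CoInf (insert X J)
    · refine ⟨insert X J, subset_insert _ _, ?_, h3.1, h3.2, card_insert_lt hcard X,
        Or.inl (mem_insert _ _)⟩
      exact (finite_singleton X).subset (fun x hx => by
        rcases hx.1 with rfl | h
        · exact rfl
        · exact absurd h hx.2)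
    · rw [not_and_or] at h3
      rcases h3 with h3 | h3
      · refine ⟨J, Subset.rfl, by simp, hJ, hCo, hcard, Or.inr (Or.inl ?_)⟩
        rwa [Set.union_singleton]
      · refine ⟨J, Subset.rfl, by simp, hJ, hCo, hcard, Or.inr (Or.inr ?_)⟩
        simp only [CoInf, not_forall] at h3
        obtain ⟨F, hF, hfin⟩ := h3
        rw [not_infinite] at hfin
        refine ⟨F.erase X, ?_, ?_⟩
        · intro g hg
          have h1 := Finset.ne_of_mem_erase (Finset.mem_coe.1 hg)
          have h2 := hF (Finset.mem_coe.2 (Finset.mem_of_mem_erase (Finset.mem_coe.1 hg)))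
          rcases h2 with rfl | h2
          · exact absurd rfl h1
          · exact h2
        · refine hfin.subset ?_
          intro x hx
          rintro ⟨g, hg, hxg⟩
          by_cases hgX : g = X
          · exact hx (Or.inl (hgX ▸ hxg))
          · exact hx (Or.inr ⟨g, Finset.mem_coe.2
              (Finset.mem_erase.2 ⟨hgX, Finset.mem_coe.1 hg⟩), hxg⟩)
  have hA₀ : A ∈ J₀ := hJ0sub hA
  -- Step 1 : the swallowing member (for the pc-point property)
  obtain ⟨J₁, B₁, hJ1sub, hJ1fin, hJ1II, hJ1Co, hJ1card, hB₁mem, hB₁ne, hB₁inf, hB₁thin⟩ :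
      ∃ (J₁ : Set (Set ℕ)) (B₁ : Set ℕ), J₀ ⊆ J₁ ∧ (J₁ \ J₀).Finite ∧ IdealIndependent J₁ ∧
        CoInf J₁ ∧ #J₁ < 𝕔 ∧ B₁ ∈ J₁ ∧ B₁ ≠ A ∧ (A \ B₁).Infinite ∧
        (∀ C ∈ J₀, C ≠ A → ((A \ B₁) ∩ C).Finite) := by
    obtain ⟨Q₁, hQ₁inf, hQ₁A, hQ₁thin⟩ := exists_thin hp hJ0II hJ0card hA₀
    obtain ⟨R, hRsub, hRinf, hR'inf⟩ := exists_split hQ₁inf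
    obtain ⟨B₁, hB₁l, hB₁eq, hB₁II, hB₁Co⟩ := addOne hp hJ0II hJ0Co hJ0card hA₀
      (diff_subset : A \ Q₁ ⊆ A) hR'inf
      (by rintro x ⟨hx1, hx2⟩; exact ⟨hQ₁A hx1, fun h => h.2 hx1⟩)
      hRinf
      (by rintro x hx
          refine ⟨hQ₁A (hRsub hx), ?_⟩
          rintro (⟨_, h2⟩ | h)
          · exact h2 (hRsub hx)
          · exact h.2 hx)
      (fun C hC hCA => (hQ₁thin C hC hCA).subset
        (inter_subset_inter_left _ (fun x hx => hx.1)))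
      (fun C hC hCA => (hQ₁thin C hC hCA).subset
        (inter_subset_inter_left _ hRsub))
    have heq : A \ B₁ = R := by
      rw [hB₁eq]
      ext x
      constructor
      · rintro ⟨⟨hxA, hxS⟩, hxQ⟩
        have hxQ₁ : x ∈ Q₁ := by by_contra h; exact hxS ⟨hxA, h⟩
        by_cases h : x ∈ R
        · exact h
        · exact absurd ⟨hxQ₁, h⟩ hxQ
      · intro hx
        exact ⟨⟨hQ₁A (hRsub hx), fun h => h.2 (hRsub hx)⟩, fun h => h.2 hx⟩
    refine ⟨insert B₁ J₀, B₁, subset_insert _ _, (finite_singleton B₁).subset (fun x hx => by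
        rcases hx.1 with rfl | h
        · exact rfl
        · exact absurd h hx.2), hB₁II, hB₁Co, card_insert_lt hJ0card B₁,
      mem_insert _ _, ?_, ?_, ?_⟩
    · intro h
      rw [h] at heq
      rw [diff_self] at heq
      exact hRinf.nonempty.ne_empty heq.symm
    · rw [heq]; exact hRinf
    · intro C hC hCA
      rw [heq]
      exact (hQ₁thin C hC hCA).subset (inter_subset_inter_left _ hRsub)
  have hA₁ : A ∈ J₁ := hJ1sub hA₀
  -- Step 2 : deciding X in the complemented filter of A
  obtain ⟨J₂, hJ2sub, hJ2fin, hJ2II, hJ2Co, hJ2card, hT2⟩ :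
      ∃ J₂ : Set (Set ℕ), J₁ ⊆ J₂ ∧ (J₂ \ J₁).Finite ∧ IdealIndependent J₂ ∧ CoInf J₂ ∧
        Cardinal.mk J₂ < 𝕔 ∧
        ((∃ F : Finset (Set ℕ), ↑F ⊆ J₂ \ {A} ∧ A \ ⋃₀ ↑F ⊆ X) ∨
         (∃ F : Finset (Set ℕ), ↑F ⊆ J₂ \ {A} ∧ A ∩ X ⊆ ⋃₀ ↑F)) := by
    obtain ⟨Q₂, hQ₂inf, hQ₂A, hQ₂thin⟩ := exists_thin hp hJ1II hJ1card hA₁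
    by_cases h2 : (Q₂ ∩ X).Infinite
    · obtain ⟨R, hRsub, hRinf, hR'inf⟩ := exists_split h2
      obtain ⟨B₂, hB₂l, hB₂eq, hB₂II, hB₂Co⟩ := addOne hp hJ1II hJ1Co hJ1card hA₁
        (diff_subset : A \ X ⊆ A) hRinf
        (by rintro x hx
            obtain ⟨hxQ, hxX⟩ := hRsub hx
            exact ⟨hQ₂A hxQ, fun h => h.2 hxX⟩)
        hR'inf
        (by rintro x ⟨⟨hxQ, hxX⟩, hxR⟩
            refine ⟨hQ₂A hxQ, ?_⟩
            rintro (⟨_, h⟩ | h)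
            · exact h hxX
            · exact hxR h)
        (fun C hC hCA => (hQ₂thin C hC hCA).subset
          (inter_subset_inter_left _ (fun x hx => (hRsub hx).1)))
        (fun C hC hCA => (hQ₂thin C hC hCA).subset
          (inter_subset_inter_left _ (fun x hx => hx.1.1)))
      have hB₂ne : B₂ ≠ A := by
        intro h
        rw [h, diff_self] at hB₂eq
        have : (Q₂ ∩ X) \ R ⊆ (∅ : Set ℕ) := by
          rw [hB₂eq]
          rintro x ⟨⟨hxQ, hxX⟩, hxR⟩
          exact ⟨⟨hQ₂A hxQ, fun h => h.2 hxX⟩, hxR⟩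
        exact hR'inf.nonempty.ne_empty (subset_empty_iff.1 this)
      refine ⟨insert B₂ J₁, subset_insert _ _, (finite_singleton B₂).subset (fun x hx => by
          rcases hx.1 with rfl | h
          · exact rfl
          · exact absurd h hx.2), hB₂II, hB₂Co, card_insert_lt hJ1card B₂,
        Or.inl ⟨{B₂}, ?_, ?_⟩⟩
      · intro g hg
        rcases Finset.mem_singleton.1 (Finset.mem_coe.1 hg) with rfl
        exact ⟨mem_insert _ _, hB₂ne⟩
      · intro x hx
        rw [Finset.coe_singleton, sUnion_singleton] at hx
        have := hB₂eq ▸ hx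
        rcases this with ⟨⟨hxA, hxS⟩, _⟩
        by_contra hxX
        exact hxS ⟨hxA, hxX⟩
    · rw [not_infinite] at h2
      have hQX : (Q₂ \ X).Infinite := by
        have h1 : (Q₂ \ (Q₂ ∩ X)).Infinite := hQ₂inf.diff h2
        have h2' : Q₂ \ (Q₂ ∩ X) = Q₂ \ X := by ext x; simp
        rwa [h2'] at h1
      obtain ⟨R, hRsub, hRinf, hR'inf⟩ := exists_split hQX
      obtain ⟨B₂, hB₂l, hB₂eq, hB₂II, hB₂Co⟩ := addOne hp hJ1II hJ1Co hJ1card hA₁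
        (inter_subset_left : A ∩ X ⊆ A) hRinf
        (by rintro x hx
            obtain ⟨hxQ, hxX⟩ := hRsub hx
            exact ⟨hQ₂A hxQ, fun h => hxX h.2⟩)
        hR'inf
        (by rintro x ⟨⟨hxQ, hxX⟩, hxR⟩
            refine ⟨hQ₂A hxQ, ?_⟩
            rintro (h | h)
            · exact hxX h.2
            · exact hxR h)
        (fun C hC hCA => (hQ₂thin C hC hCA).subset
          (inter_subset_inter_left _ (fun x hx => (hRsub hx).1)))
        (fun C hC hCA => (hQ₂thin C hC hCA).subset
          (inter_subset_inter_left _ (fun x hx => hx.1.1)))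
      have hB₂ne : B₂ ≠ A := by
        intro h
        rw [h, diff_self] at hB₂eq
        have : (Q₂ \ X) \ R ⊆ (∅ : Set ℕ) := by
          rw [hB₂eq]
          rintro x ⟨⟨hxQ, hxX⟩, hxR⟩
          exact ⟨⟨hQ₂A hxQ, fun h => hxX h.2⟩, hxR⟩
        exact hR'inf.nonempty.ne_empty (subset_empty_iff.1 this)
      refine ⟨insert B₂ J₁, subset_insert _ _, (finite_singleton B₂).subset (fun x hx => by
          rcases hx.1 with rfl | h
          · exact rfl
          · exact absurd h hx.2), hB₂II, hB₂Co, card_insert_lt hJ1card B₂,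
        Or.inr ⟨{B₂}, ?_, ?_⟩⟩
      · intro g hg
        rcases Finset.mem_singleton.1 (Finset.mem_coe.1 hg) with rfl
        exact ⟨mem_insert _ _, hB₂ne⟩
      · intro x hx
        rw [Finset.coe_singleton, sUnion_singleton]
        exact hB₂l (Or.inl hx)
  have hA₂ : A ∈ J₂ := hJ2sub hA₁
  -- Step 3 : covering the point n
  obtain ⟨J₃, hJ3sub, hJ3fin, hJ3II, hJ3Co, hT4⟩ :
      ∃ J₃ : Set (Set ℕ), J₂ ⊆ J₃ ∧ (J₃ \ J₂).Finite ∧ IdealIndependent J₃ ∧ CoInf J₃ ∧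
        (n ∈ A → ∃ C ∈ J₃, C ≠ A ∧ n ∈ C) := by
    by_cases hn : n ∈ A
    · obtain ⟨Q₃, hQ₃inf, hQ₃A, hQ₃thin⟩ := exists_thin hp hJ2II hJ2card hA₂
      have hQ₃' : (Q₃ \ {n}).Infinite := hQ₃inf.diff (finite_singleton n)
      obtain ⟨R, hRsub, hRinf, hR'inf⟩ := exists_split hQ₃'
      obtain ⟨B₃, hB₃l, hB₃eq, hB₃II, hB₃Co⟩ := addOne hp hJ2II hJ2Co hJ2card hA₂
        (singleton_subset_iff.2 hn) hRinf
        (by rintro x hx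
            obtain ⟨hxQ, hxn⟩ := hRsub hx
            exact ⟨hQ₃A hxQ, hxn⟩)
        hR'inf
        (by rintro x ⟨⟨hxQ, hxn⟩, hxR⟩
            refine ⟨hQ₃A hxQ, ?_⟩
            rintro (h | h)
            · exact hxn h
            · exact hxR h)
        (fun C hC hCA => (hQ₃thin C hC hCA).subset
          (inter_subset_inter_left _ (fun x hx => (hRsub hx).1)))
        (fun C hC hCA => (hQ₃thin C hC hCA).subset
          (inter_subset_inter_left _ (fun x hx => hx.1.1)))
      have hB₃ne : B₃ ≠ A := by
        intro h
        rw [h, diff_self] at hB₃eq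
        have : (Q₃ \ {n}) \ R ⊆ (∅ : Set ℕ) := by
          rw [hB₃eq]
          rintro x ⟨⟨hxQ, hxn⟩, hxR⟩
          exact ⟨⟨hQ₃A hxQ, hxn⟩, hxR⟩
        exact hR'inf.nonempty.ne_empty (subset_empty_iff.1 this)
      refine ⟨insert B₃ J₂, subset_insert _ _, (finite_singleton B₃).subset (fun x hx => by
          rcases hx.1 with rfl | h
          · exact rfl
          · exact absurd h hx.2), hB₃II, hB₃Co, fun _ => ⟨B₃, mem_insert _ _, hB₃ne, ?_⟩⟩
      exact hB₃l (Or.inl rfl)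
    · exact ⟨J₂, Subset.rfl, by simp, hJ2II, hJ2Co, fun h => absurd h hn⟩
  -- Assemble
  have hsub : J ⊆ J₃ := hJ0sub.trans (hJ1sub.trans (hJ2sub.trans hJ3sub))
  refine ⟨J₃, hsub, ?_, hJ3II, hJ3Co, ?_, ?_, ?_, hT4⟩
  · refine (((hJ3fin.union hJ2fin).union hJ1fin).union hJ0fin).subset ?_
    rintro x ⟨hx3, hxJ⟩
    by_cases h2 : x ∈ J₂
    · by_cases h1 : x ∈ J₁
      · by_cases h0 : x ∈ J₀
        · exact Or.inr ⟨h0, hxJ⟩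
        · exact Or.inl (Or.inr ⟨h1, h0⟩)
      · exact Or.inl (Or.inl (Or.inr ⟨h2, h1⟩))
    · exact Or.inl (Or.inl (Or.inl ⟨hx3, h2⟩))
  · exact ⟨B₁, (hJ2sub.trans hJ3sub) hB₁mem, hB₁ne, hB₁inf,
      fun C hC hCA => hB₁thin C (hJ0sub hC) hCA⟩
  · rcases hT2 with ⟨F, hF, hFX⟩ | ⟨F, hF, hFX⟩
    · exact Or.inl ⟨F, fun g hg => ⟨hJ3sub (hF hg).1, (hF hg).2⟩, hFX⟩
    · exact Or.inr ⟨F, fun g hg => ⟨hJ3sub (hF hg).1, (hF hg).2⟩, hFX⟩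
  · rcases hT3 with h | h
    · exact Or.inl ((hJ1sub.trans (hJ2sub.trans hJ3sub)) h)
    · exact Or.inr h
lemma two_power_le (hp : pNumber = 2 ^ aleph0) (μ : Cardinal.{0}) (hμ : ℵ₀ ≤ μ) (hlt : μ < 𝕔) :
    (2 : Cardinal) ^ μ ≤ 𝕔 := by
  set L : Type := Quotient.out μ with hL
  have hLcard : #L = μ := mk_out μ
  have hle : #L ≤ #(Set ℕ) := by
    rw [hLcard, mk_set, mk_nat]
    exact hlt.le
  obtain ⟨ι⟩ := (Cardinal.le_def L (Set ℕ)).1 hle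
  set member : (L → Prop) → L → Set ℕ := fun f i => if f i then ind (ι i) else (ind (ι i))ᶜ
    with hmember
  have hZinf : ∀ (f : L → Prop), ∀ A ∈ Set.range (member f), A.Infinite := by
    rintro f A ⟨i, rfl⟩
    simp only [hmember]
    by_cases h : f i
    · rw [if_pos h]; exact ind_infinite (ι i)
    · rw [if_neg h]; exact ind_compl_infinite (ι i)
  have hLne : Nonempty L := by
    rw [← mk_ne_zero_iff, hLcard]
    exact (aleph0_pos.trans_le hμ).ne'
  have hZfip : ∀ (f : L → Prop), HasFIP (Set.range (member f)) := by
    intro f F hF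
    set u : Set ℕ → L := fun g =>
      if h : ∃ i, member f i = g then h.choose else Classical.arbitrary L with hu
    have hu1 : ∀ g ∈ F, member f (u g) = g := by
      intro g hg
      have h : ∃ i, member f i = g := hF (Finset.mem_coe.2 hg)
      simp only [hu, dif_pos h]
      exact h.choose_spec
    set s : Finset (Set ℕ) := F.image (fun g => ι (u g)) with hs
    set ft : Set ℕ → Prop := fun X => ∀ i : L, ι i = X → f i with hft
    have hcore := ind_core s ft
    refine ((hcore.image (tEquiv.injective.injOn)).mono ?_)
    rintro n ⟨p, hp, rfl⟩
    intro g hgF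
    have hgF' : g ∈ F := Finset.mem_coe.1 hgF
    have hmemb := hu1 g hgF'
    have hXs : ι (u g) ∈ s := Finset.mem_image_of_mem _ hgF'
    have hiff := hp (ι (u g)) hXs
    have hftiff : ft (ι (u g)) ↔ f (u g) := by
      constructor
      · intro h
        exact h (u g) rfl
      · intro h i hi
        have : i = u g := ι.injective hi
        rwa [this]
    by_cases hfu : f (u g)
    · have hgeq : g = ind (ι (u g)) := by
        conv_lhs => rw [← hmemb]
        simp only [hmember, if_pos hfu]
      have hmem2 : tEquiv p ∈ ind (ι (u g)) := mem_ind.2 (hiff.2 (hftiff.2 hfu))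
      rwa [← hgeq] at hmem2
    · have hgeq : g = (ind (ι (u g)))ᶜ := by
        conv_lhs => rw [← hmemb]
        simp only [hmember, if_neg hfu]
      have hmem2 : tEquiv p ∈ (ind (ι (u g)))ᶜ :=
        fun hmem => hfu (hftiff.1 (hiff.1 (mem_ind.1 hmem)))
      rwa [← hgeq] at hmem2
  have hZcard : ∀ f : L → Prop, #(Set.range (member f)) < 𝕔 := by
    intro f
    refine (mk_range_le).trans_lt ?_
    rw [hLcard]
    exact hlt
  set Y : (L → Prop) → Set ℕ := fun f =>
    (pseudo_of_small hp _ (hZinf f) (hZfip f) (hZcard f)).choose with hYdef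
  have hYspec : ∀ f, IsPseudoIntersection (Y f) (Set.range (member f)) := fun f =>
    (pseudo_of_small hp _ (hZinf f) (hZfip f) (hZcard f)).choose_spec
  have hYinj : Function.Injective Y := by
    intro f f' hff
    funext i
    by_contra hi
    have hcases : (f i ∧ ¬ f' i) ∨ (¬ f i ∧ f' i) := by tauto
    have hYf := hYspec f
    have hYf' := hYspec f'
    have hsplit : Y f ⊆ (Y f \ ind (ι i)) ∪ (Y f \ (ind (ι i))ᶜ) := by
      intro x hx
      by_cases hm : x ∈ ind (ι i)
      · exact Or.inr ⟨hx, fun hc => hc hm⟩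
      · exact Or.inl ⟨hx, hm⟩
    have hfin : (Y f).Finite := by
      rcases hcases with ⟨h1, h2⟩ | ⟨h1, h2⟩
      · have d1 : (Y f \ ind (ι i)).Finite := by
          have := hYf.2 (member f i) ⟨i, rfl⟩
          simpa only [hmember, if_pos h1] using this
        have d2 : (Y f \ (ind (ι i))ᶜ).Finite := by
          have := hYf'.2 (member f' i) ⟨i, rfl⟩
          rw [← hff] at this
          simpa only [hmember, if_neg h2] using this
        exact (d1.union d2).subset hsplit
      · have d1 : (Y f \ (ind (ι i))ᶜ).Finite := by
          have := hYf.2 (member f i) ⟨i, rfl⟩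
          simpa only [hmember, if_neg h1] using this
        have d2 : (Y f \ ind (ι i)).Finite := by
          have := hYf'.2 (member f' i) ⟨i, rfl⟩
          rw [← hff] at this
          simpa only [hmember, if_pos h2] using this
        exact (d2.union d1).subset hsplit
    exact hYf.1 hfin
  calc (2 : Cardinal) ^ μ = #(L → Prop) := by
        rw [mk_arrow, mk_Prop, lift_id, lift_id, hLcard]
  _ ≤ #(Set ℕ) := mk_le_of_injective hYinj
  _ = 𝕔 := by rw [mk_set, mk_nat]

lemma c_ord_cof (hp : pNumber = 2 ^ aleph0) : ((2 : Cardinal.{0}) ^ aleph0).ord.cof = (2 : Cardinal.{0}) ^ aleph0 := by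
  refine le_antisymm (Ordinal.cof_ord_le _) ?_
  by_contra h
  push_neg at h
  have hinf : ℵ₀ ≤ ((2 : Cardinal.{0}) ^ aleph0).ord.cof :=
    Ordinal.aleph0_le_cof.2 (Cardinal.isSuccLimit_ord aleph0_le_c)
  have h1 : (2 : Cardinal.{0}) ^ (((2 : Cardinal.{0}) ^ aleph0).ord.cof) ≤ 𝕔 :=
    two_power_le hp _ hinf h
  have h2 : ((2 : Cardinal.{0}) ^ aleph0) < ((2 : Cardinal.{0}) ^ aleph0) ^ ((2 : Cardinal.{0}) ^ aleph0).ord.cof :=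
    Cardinal.lt_power_cof aleph0_le_c
  have h3 : ((2 : Cardinal.{0}) ^ aleph0) ^ (((2 : Cardinal.{0}) ^ aleph0).ord.cof)
      = 2 ^ (((2 : Cardinal.{0}) ^ aleph0).ord.cof) := by
    rw [← Cardinal.power_mul, Cardinal.mul_eq_right hinf hinf aleph0_ne_zero]
  rw [h3] at h2
  exact absurd h1 (not_le.2 h2)

lemma finset_stage {α : W} {G : Finset (Set ℕ)} (hG : ↑G ⊆ famAt α) :
    (↑G : Set (Set ℕ)) ⊆ {Ev} ∨ ∃ β, β < α ∧ ↑G ⊆ famAt β ∪ news β := by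
  classical
  induction G using Finset.induction_on with
  | empty => exact Or.inl (by simp)
  | @insert x G hxG IH =>
    have hGsub : ↑G ⊆ famAt α := by
      intro y hy
      exact hG (by simp [hy])
    have hx' : x ∈ famAt α := hG (by simp)
    have hx'' : x = Ev ∨ ∃ δ, δ < α ∧ x ∈ news δ := by
      rcases hx' with rfl | hmem
      · exact Or.inl rfl
      · obtain ⟨s, ⟨δ, rfl⟩, hs⟩ := hmem
        simp only [mem_iUnion] at hs
        exact Or.inr ⟨δ, hs.1, hs.2⟩
    rcases IH hGsub with hL | ⟨β, hβ, hR⟩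
    · rcases hx'' with rfl | ⟨δ, hδ, hxδ⟩
      · left
        intro y hy
        rcases Finset.mem_insert.1 (Finset.mem_coe.1 hy) with rfl | hy'
        · rfl
        · exact hL (Finset.mem_coe.2 hy')
      · right
        refine ⟨δ, hδ, ?_⟩
        intro y hy
        rcases Finset.mem_insert.1 (Finset.mem_coe.1 hy) with rfl | hy'
        · exact Or.inr hxδ
        · have : y = Ev := hL (Finset.mem_coe.2 hy')
          rw [this]
          exact Or.inl (Ev_mem_famAt δ)
    · rcases hx'' with rfl | ⟨δ, hδ, hxδ⟩
      · right
        refine ⟨β, hβ, ?_⟩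
        intro y hy
        rcases Finset.mem_insert.1 (Finset.mem_coe.1 hy) with rfl | hy'
        · exact Or.inl (Ev_mem_famAt β)
        · exact hR (Finset.mem_coe.2 hy')
      · right
        refine ⟨max β δ, max_lt hβ hδ, ?_⟩
        intro y hy
        rcases Finset.mem_insert.1 (Finset.mem_coe.1 hy) with rfl | hy'
        · exact stage_mono (le_max_right β δ) (Or.inr hxδ)
        · exact stage_mono (le_max_left β δ) (hR (Finset.mem_coe.2 hy'))

lemma mainStep' (hp : pNumber = 2 ^ aleph0) {J : Set (Set ℕ)} (hJ : IdealIndependent J)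
    (hCo : CoInf J) (hcard : #J < 𝕔) {A : Set ℕ} (hA : A ∈ J) (X : Set ℕ) (n : ℕ) :
    ∃ J', BigPred J A X n J' :=
  mainStep hp hJ hCo hcard hA X n

lemma famAt_good (α : W)
    (IH : ∀ β, β < α → IdealIndependent (famAt β ∪ news β) ∧ CoInf (famAt β ∪ news β)) :
    IdealIndependent (famAt α) ∧ CoInf (famAt α) := by
  constructor
  · intro A hA F hF
    have hG : ↑(insert A F) ⊆ famAt α := by
      intro y hy
      rcases Finset.mem_insert.1 (Finset.mem_coe.1 hy) with rfl | hy'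
      · exact hA
      · exact (hF (Finset.mem_coe.2 hy')).1
    rcases finset_stage hG with hL | ⟨β, hβ, hR⟩
    · have hAEv : A = Ev := hL (by simp)
      have hF0 : F = ∅ := by
        rcases Finset.eq_empty_or_nonempty F with h | ⟨g, hg⟩
        · exact h
        · have h1 : g = Ev := hL (by
            simp only [Finset.coe_insert, Set.mem_insert_iff, Finset.mem_coe]
            exact Or.inr hg)
          exact absurd (h1.trans hAEv.symm) (hF (Finset.mem_coe.2 hg)).2
      subst hF0
      rw [hAEv]
      simpa using Ev_infinite
    · refine ((IH β hβ).1) A (hR (by simp)) F ?_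
      intro y hy
      refine ⟨hR ?_, (hF hy).2⟩
      simp only [Finset.coe_insert, Set.mem_insert_iff, Finset.mem_coe]
      exact Or.inr (Finset.mem_coe.1 hy)
  · intro F hF
    rcases finset_stage hF with hL | ⟨β, hβ, hR⟩
    · refine Ev_compl_infinite.mono ?_
      intro x hx
      rintro ⟨g, hg, hxg⟩
      rcases hL hg with rfl
      exact hx hxg
    · exact (IH β hβ).2 F hR

lemma stage_good (hp : pNumber = 2 ^ aleph0) : ∀ α : W,
    IdealIndependent (famAt α ∪ news α) ∧ CoInf (famAt α ∪ news α) := by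
  intro α
  refine WellFounded.induction (wellFounded_lt (α := W))
    (C := fun γ => IdealIndependent (famAt γ ∪ news γ) ∧ CoInf (famAt γ ∪ news γ)) α ?_
  intro γ IH
  have hfa := famAt_good γ IH
  have hex : ∃ J', BigPred (famAt γ) (effA (famAt γ) (task γ)) (task γ).2.1 (task γ).2.2 J' := by
    refine mainStep' hp hfa.1 hfa.2 (card_famAt_lt γ) ?_ _ _
    rw [effA]
    split_ifs with h
    · exact h
    · exact Ev_mem_famAt γ
  have hspec := stepSet_spec hex
  rw [← news_eq] at hspec
  exact ⟨hspec.2.2.1, hspec.2.2.2.1⟩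

lemma stage_spec (hp : pNumber = 2 ^ aleph0) (α : W) :
    BigPred (famAt α) (effA (famAt α) (task α)) (task α).2.1 (task α).2.2
      (famAt α ∪ news α) := by
  have hfa := famAt_good α (fun β _ => stage_good hp β)
  have hex : ∃ J', BigPred (famAt α) (effA (famAt α) (task α)) (task α).2.1 (task α).2.2 J' := by
    refine mainStep' hp hfa.1 hfa.2 (card_famAt_lt α) ?_ _ _
    rw [effA]
    split_ifs with h
    · exact h
    · exact Ev_mem_famAt α
  have hspec := stepSet_spec hex
  rwa [← news_eq] at hspec

lemma fam_finite_char (G : Finset (Set ℕ)) (hG : ↑G ⊆ fam) :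
    ∃ α, (↑G : Set (Set ℕ)) ⊆ famAt α ∪ news α := by
  classical
  induction G using Finset.induction_on with
  | empty => exact ⟨nonemptyW.some, by simp⟩
  | @insert x G hxG IH =>
    have hGsub : ↑G ⊆ fam := by
      intro y hy
      exact hG (by simp [hy])
    obtain ⟨α, hα⟩ := IH hGsub
    have hx' : x ∈ fam := hG (by simp)
    have hx'' : x = Ev ∨ ∃ δ, x ∈ news δ := by
      rcases hx' with rfl | hmem
      · exact Or.inl rfl
      · obtain ⟨s, ⟨δ, rfl⟩, hs⟩ := hmem
        exact Or.inr ⟨δ, hs⟩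
    rcases hx'' with rfl | ⟨δ, hxδ⟩
    · refine ⟨α, ?_⟩
      intro y hy
      rcases Finset.mem_insert.1 (Finset.mem_coe.1 hy) with rfl | hy'
      · exact Or.inl (Ev_mem_famAt α)
      · exact hα (Finset.mem_coe.2 hy')
    · refine ⟨max α δ, ?_⟩
      intro y hy
      rcases Finset.mem_insert.1 (Finset.mem_coe.1 hy) with rfl | hy'
      · exact stage_mono (le_max_right α δ) (Or.inr hxδ)
      · exact stage_mono (le_max_left α δ) (hα (Finset.mem_coe.2 hy'))

lemma fam_II (hp : pNumber = 2 ^ aleph0) : IdealIndependent fam := by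
  intro A hA F hF
  have hG : ↑(insert A F) ⊆ fam := by
    intro y hy
    rcases Finset.mem_insert.1 (Finset.mem_coe.1 hy) with rfl | hy'
    · exact hA
    · exact (hF (Finset.mem_coe.2 hy')).1
  obtain ⟨α, hα⟩ := fam_finite_char _ hG
  refine (stage_good hp α).1 A (hα (by simp)) F ?_
  intro y hy
  exact ⟨hα (by simp [Finset.mem_coe.1 hy]), (hF hy).2⟩

lemma fam_CoInf (hp : pNumber = 2 ^ aleph0) : CoInf fam := by
  intro F hF
  obtain ⟨α, hα⟩ := fam_finite_char _ hF
  exact (stage_good hp α).2 F hα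

lemma exists_birth {x : Set ℕ} (hx : x ∈ fam) : ∃ β : W, ∀ γ, β < γ → x ∈ famAt γ := by
  rcases hx with rfl | hmem
  · exact ⟨nonemptyW.some, fun γ _ => Ev_mem_famAt γ⟩
  · obtain ⟨s, ⟨δ, rfl⟩, hs⟩ := hmem
    exact ⟨δ, fun γ hγ => news_subset_famAt hγ hs⟩

lemma exists_serve (hp : pNumber = 2 ^ aleph0) {A : Set ℕ} (hA : A ∈ fam) (X : Set ℕ) (n : ℕ) (α₀ : W) :
    ∃ α, α₀ < α ∧ A ∈ famAt α ∧ BigPred (famAt α) A X n (famAt α ∪ news α) := by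
  obtain ⟨β, hβ⟩ := exists_birth hA
  obtain ⟨α, hα, htask⟩ := task_unbounded (A, X, n) (max α₀ β)
  have hAα : A ∈ famAt α := hβ α ((le_max_right _ _).trans_lt hα)
  have hbig := stage_spec hp α
  rw [htask] at hbig
  simp only [effA, if_pos hAα] at hbig
  exact ⟨α, (le_max_left _ _).trans_lt hα, hAα, hbig⟩


lemma II_mono {J J' : Set (Set ℕ)} (hsub : J' ⊆ J) (hJ : IdealIndependent J) :
    IdealIndependent J' :=
  fun A hA F hF => hJ A (hsub hA) F (fun y hy => ⟨hsub (hF hy).1, (hF hy).2⟩)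

lemma mem_complFilter {I : Set (Set ℕ)} {A U : Set ℕ} :
    U ∈ complFilter I A ↔ ∃ F : Finset (Set ℕ), ↑F ⊆ I \ {A} ∧ A \ ⋃₀ ↑F ⊆ U := by
  rw [complFilter, Filter.mem_generate_iff]
  constructor
  · rintro ⟨t, hts, htfin, hsub⟩
    set u : Set ℕ → Finset (Set ℕ) := fun s =>
      if h : ∃ F : Finset (Set ℕ), ↑F ⊆ I \ {A} ∧ s = A \ ⋃₀ ↑F then h.choose else ∅ with hu
    have hu1 : ∀ s ∈ t, ↑(u s) ⊆ I \ {A} ∧ s = A \ ⋃₀ ↑(u s) := by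
      intro s hs
      have h : ∃ F : Finset (Set ℕ), ↑F ⊆ I \ {A} ∧ s = A \ ⋃₀ ↑F := hts hs
      simp only [hu, dif_pos h]
      exact h.choose_spec
    refine ⟨htfin.toFinset.biUnion u, ?_, ?_⟩
    · intro g hg
      obtain ⟨s, hs, hgs⟩ := Finset.mem_biUnion.1 (Finset.mem_coe.1 hg)
      exact (hu1 s (htfin.mem_toFinset.1 hs)).1 (Finset.mem_coe.2 hgs)
    · refine subset_trans ?_ hsub
      rintro x hx s hs
      rw [(hu1 s hs).2]
      refine ⟨hx.1, fun hxu => hx.2 ?_⟩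
      obtain ⟨g, hg, hxg⟩ := hxu
      exact ⟨g, Finset.mem_coe.2 (Finset.mem_biUnion.2
        ⟨s, htfin.mem_toFinset.2 hs, Finset.mem_coe.1 hg⟩), hxg⟩
  · rintro ⟨F, hF, hsub⟩
    exact ⟨{A \ ⋃₀ ↑F}, singleton_subset_iff.2 ⟨F, hF, rfl⟩, finite_singleton _,
      by rwa [sInter_singleton]⟩

lemma fam_large (hp : pNumber = 2 ^ aleph0) (T : Set (Set ℕ)) (hT : T.Finite) :
    ∃ C ∈ fam, C ∉ T := by
  by_contra h
  push_neg at h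
  have hfin : (fam \ {Ev}).Finite := hT.subset (fun x hx => h x hx.1)
  set G : Finset (Set ℕ) := hfin.toFinset with hGdef
  have hGsub : ↑G ⊆ fam \ {Ev} := by
    intro y hy
    exact hfin.mem_toFinset.1 (Finset.mem_coe.1 hy)
  have hcov : ∀ n ∈ Ev, n ∈ ⋃₀ (↑G : Set (Set ℕ)) := by
    intro n hn
    obtain ⟨α, hα, hAα, hbig⟩ := exists_serve hp Ev_mem_fam ∅ n nonemptyW.some
    obtain ⟨C, hC, hCne, hnC⟩ := hbig.2.2.2.2.2.2.2 hn
    refine ⟨C, Finset.mem_coe.2 (hfin.mem_toFinset.2 ⟨stage_subset_fam α hC, hCne⟩), hnC⟩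
  have hII := fam_II hp Ev Ev_mem_fam G hGsub
  obtain ⟨n, hn1, hn2⟩ := hII.nonempty
  exact hn2 (hcov n hn1)

end
end MIIF

/-- If 𝔭 = 2^ℵ₀ then there is a maximal ideal independent family all of whose
complemented filters are `p_𝔠`-points. -/
theorem exists_maxIdealIndependent_pc_points (hp : pNumber = 2 ^ aleph0) :
    ∃ I : Set (Set ℕ), MaxIdealIndependent I ∧
      ∀ A ∈ I, IsPcPoint (complFilter I A) := by
  classical
  refine ⟨MIIF.fam, ⟨MIIF.fam_II hp, ?_⟩, ?_⟩
  · -- maximality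
    intro J hJ hsub
    refine Subset.antisymm ?_ hsub
    intro X hX
    by_contra hXf
    have hIIX : IdealIndependent (MIIF.fam ∪ {X}) :=
      MIIF.II_mono (union_subset hsub (singleton_subset_iff.2 hX)) hJ
    obtain ⟨α, hα, hEvα, hbig⟩ := MIIF.exists_serve hp MIIF.Ev_mem_fam X 0 MIIF.nonemptyW.some
    rcases hbig.2.2.2.2.2.2.1 with hmem | hnII | ⟨F, hF, hKfin⟩
    · exact hXf (MIIF.stage_subset_fam α hmem)
    · refine hnII (MIIF.II_mono ?_ hIIX)
      exact union_subset_union_left _ (MIIF.famAt_subset_fam α)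
    · obtain ⟨C', hC'fam, hC'nmem⟩ :=
        MIIF.fam_large hp (↑F ∪ {X}) ((F.finite_toSet).union (finite_singleton X))
      have hC'ne : C' ∉ (↑F : Set (Set ℕ)) := fun h => hC'nmem (Or.inl h)
      have hC'X : C' ≠ X := fun h => hC'nmem (Or.inr h)
      have hsubF : ↑(insert X F) ⊆ (MIIF.fam ∪ {X}) \ {C'} := by
        intro y hy
        rcases Finset.mem_insert.1 (Finset.mem_coe.1 hy) with rfl | hy'
        · exact ⟨Or.inr rfl, fun hh => hC'X (Eq.symm hh)⟩
        · refine ⟨Or.inl (MIIF.famAt_subset_fam α (hF (Finset.mem_coe.2 hy'))), ?_⟩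
          intro hh
          have hyC : y = C' := hh
          exact hC'ne (hyC ▸ Finset.mem_coe.2 hy')
      have happly := hIIX C' (Or.inl hC'fam) (insert X F) hsubF
      refine happly (hKfin.subset ?_)
      rintro x ⟨hxC, hxU⟩
      rintro (h | h)
      · exact hxU ⟨X, Finset.mem_coe.2 (Finset.mem_insert_self _ _), h⟩
      · obtain ⟨g, hg, hxg⟩ := h
        exact hxU ⟨g, Finset.mem_coe.2
          (Finset.mem_insert_of_mem (Finset.mem_coe.1 hg)), hxg⟩
  · -- each complemented filter is a p_𝔠-point
    intro A hA
    have hmemchar : ∀ U : Set ℕ, U ∈ complFilter MIIF.fam A ↔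
        ∃ F : Finset (Set ℕ), ↑F ⊆ MIIF.fam \ {A} ∧ A \ ⋃₀ ↑F ⊆ U :=
      fun U => MIIF.mem_complFilter
    refine ⟨?_, ?_, ?_, ?_⟩
    · -- nontrivial
      intro hbot
      have h0 : (∅ : Set ℕ) ∈ complFilter MIIF.fam A := by
        rw [hbot]; exact Filter.mem_bot
      obtain ⟨F, hF, hsub0⟩ := (hmemchar ∅).1 h0
      have := MIIF.fam_II hp A hA F hF
      obtain ⟨x, hx⟩ := this.nonempty
      exact hsub0 hx
    · -- finer than the cofinite filter
      intro U hU
      have hUc : (Uᶜ : Set ℕ).Finite := hU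
      have hKfin : ((Uᶜ ∩ A : Set ℕ)).Finite := hUc.subset inter_subset_left
      set c : ℕ → Set ℕ := fun n =>
        if h : ∃ C, C ∈ MIIF.fam ∧ C ≠ A ∧ n ∈ C then h.choose else ∅ with hcdef
      have hc : ∀ n ∈ Uᶜ ∩ A, c n ∈ MIIF.fam ∧ c n ≠ A ∧ n ∈ c n := by
        intro n hn
        obtain ⟨α, hα, hAα, hbig⟩ := MIIF.exists_serve hp hA ∅ n MIIF.nonemptyW.some
        obtain ⟨C, hC, hCne, hnC⟩ := hbig.2.2.2.2.2.2.2 hn.2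
        have h : ∃ C, C ∈ MIIF.fam ∧ C ≠ A ∧ n ∈ C :=
          ⟨C, MIIF.stage_subset_fam α hC, hCne, hnC⟩
        simp only [hcdef, dif_pos h]
        exact h.choose_spec
      refine (hmemchar U).2 ⟨hKfin.toFinset.image c, ?_, ?_⟩
      · intro g hg
        obtain ⟨n, hn, rfl⟩ := Finset.mem_image.1 (Finset.mem_coe.1 hg)
        have := hc n (hKfin.mem_toFinset.1 hn)
        exact ⟨this.1, this.2.1⟩
      · rintro x ⟨hxA, hxU⟩
        by_contra hxnU
        have hxK : x ∈ Uᶜ ∩ A := ⟨hxnU, hxA⟩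
        refine hxU ⟨c x, Finset.mem_coe.2
          (Finset.mem_image_of_mem c (hKfin.mem_toFinset.2 hxK)), (hc x hxK).2.2⟩
    · -- ultrafilter
      intro D
      obtain ⟨α, hα, hAα, hbig⟩ := MIIF.exists_serve hp hA D 0 MIIF.nonemptyW.some
      rcases hbig.2.2.2.2.2.1 with ⟨F, hF, hsub⟩ | ⟨F, hF, hsub⟩
      · refine Or.inl ((hmemchar D).2 ⟨F, ?_, hsub⟩)
        intro y hy
        exact ⟨MIIF.stage_subset_fam α (hF hy).1, (hF hy).2⟩
      · refine Or.inr ((hmemchar Dᶜ).2 ⟨F, ?_, ?_⟩)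
        · intro y hy
          exact ⟨MIIF.stage_subset_fam α (hF hy).1, (hF hy).2⟩
        · rintro x ⟨hxA, hxF⟩ hxD
          exact hxF (hsub ⟨hxA, hxD⟩)
    · -- pseudo-intersections of small subfamilies
      intro Z hZ hcard
      set FX : Set ℕ → Finset (Set ℕ) := fun X =>
        if h : ∃ F : Finset (Set ℕ), ↑F ⊆ MIIF.fam \ {A} ∧ A \ ⋃₀ ↑F ⊆ X then h.choose else ∅
        with hFXdef
      have hFX : ∀ X ∈ Z, ↑(FX X) ⊆ MIIF.fam \ {A} ∧ A \ ⋃₀ ↑(FX X) ⊆ X := by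
        intro X hXZ
        have h := (hmemchar X).1 (hZ X hXZ)
        simp only [hFXdef, dif_pos h]
        exact h.choose_spec
      set bb : Set ℕ → MIIF.W := fun g =>
        if h : ∃ β : MIIF.W, ∀ γ, β < γ → g ∈ MIIF.famAt γ then h.choose
        else MIIF.nonemptyW.some with hbbdef
      have hbb : ∀ g ∈ MIIF.fam, ∀ γ, bb g < γ → g ∈ MIIF.famAt γ := by
        intro g hg
        have h := MIIF.exists_birth hg
        simp only [hbbdef, dif_pos h]
        exact h.choose_spec
      set GU : Set (Set ℕ) := ⋃ X ∈ Z, (↑(FX X) : Set (Set ℕ)) with hGU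
      have hGUcard : #GU < 2 ^ aleph0 := by
        refine (mk_biUnion_le (fun X => (↑(FX X) : Set (Set ℕ))) Z).trans_lt ?_
        refine Cardinal.mul_lt_of_lt MIIF.aleph0_le_c hcard ?_
        refine lt_of_le_of_lt ?_ MIIF.aleph0_lt_c
        rcases isEmpty_or_nonempty (↥Z) with h | h
        · rw [ciSup_of_empty]
          exact bot_le
        · refine ciSup_le' (fun x => ?_)
          haveI := ((FX (x : Set ℕ)).finite_toSet.countable).to_subtype
          exact Cardinal.mk_le_aleph0
      have hScard : #(bb '' GU) < 2 ^ aleph0 := mk_image_le.trans_lt hGUcard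
      haveI : IsWellOrder MIIF.W (· < ·) := isWellOrder_lt
      have hbounded : Bounded (· < ·) (bb '' GU) := by
        obtain ⟨x, hx⟩ := not_isCofinal_iff.1 (fun hc => absurd (Order.cof_le hc)
          (by rw [Ordinal.cof_toType, MIIF.c_ord_cof hp]; exact not_le.2 hScard))
        exact ⟨x, hx⟩
      obtain ⟨α₀, hα₀⟩ := hbounded
      obtain ⟨α, hα, hAα, hbig⟩ := MIIF.exists_serve hp hA ∅ 0 α₀
      obtain ⟨B, hB, hBne, hBinf, hBthin⟩ := hbig.2.2.2.2.1
      refine ⟨A \ B, ?_, hBinf, ?_⟩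
      · refine (hmemchar (A \ B)).2 ⟨{B}, ?_, ?_⟩
        · intro y hy
          rcases Finset.mem_singleton.1 (Finset.mem_coe.1 hy) with rfl
          exact ⟨MIIF.stage_subset_fam α hB, hBne⟩
        · rw [Finset.coe_singleton, sUnion_singleton]
      · intro X hXZ
        have h1 : (A \ B) \ X ⊆ (A \ B) ∩ ⋃₀ ↑(FX X) := by
          rintro x ⟨hxAB, hxX⟩
          refine ⟨hxAB, ?_⟩
          by_contra hxu
          exact hxX ((hFX X hXZ).2 ⟨hxAB.1, hxu⟩)
        refine ((MIIF.inter_sUnion_finite (FX X) ?_).subset h1)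
        intro g hg
        have hgfam : g ∈ MIIF.fam \ {A} := (hFX X hXZ).1 (Finset.mem_coe.2 hg)
        have hgGU : g ∈ GU := by
          rw [hGU]
          exact mem_iUnion.2 ⟨X, mem_iUnion.2 ⟨hXZ, Finset.mem_coe.2 hg⟩⟩
        have hbirth : bb g < α := (hα₀ (bb g) ⟨g, hgGU, rfl⟩).trans hα
        have hgfamAt : g ∈ MIIF.famAt α := hbb g hgfam.1 α hbirth
        exact hBthin g hgfamAt (fun hh => hgfam.2 hh)
end
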